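/- arXiv:1703.02748 — 4 statements merged into one kernel-verified Lean document; each statement's English description precedes it below -/
import Mathlib

section
/- Let G be a connected n-vertex d-regular multigraph with a cut-edge e such that the two connected components of G − e have a and b vertices respectively (so a + b = n). Then λ2(G) ≥ d − 1/a − 1/b. -/
open Matrix Finset BigOperators

/-- Ascending list of the real roots (with multiplicity) of the characteristic
polynomial of a square real matrix.  For a matrix all of whose eigenvalues are
real, this is the list of eigenvalues in increasing order. -/
noncomputable def eigList {n : ℕ} (A : Matrix (Fin n) (Fin n) ℝ) : List ℝ :=
  A.charpoly.roots.sort (· ≤ ·)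

/-- The second-largest eigenvalue (counted with multiplicity) of a square real
matrix with real spectrum. -/
noncomputable def lambda2 {n : ℕ} (A : Matrix (Fin n) (Fin n) ℝ) : ℝ :=
  (eigList A).getD (n - 2) 0

/-- The underlying simple graph of a multigraph given by its adjacency matrix:
two distinct vertices are adjacent iff they are joined by at least one edge. -/
def toSimple {n : ℕ} (A : Matrix (Fin n) (Fin n) ℕ) : SimpleGraph (Fin n) :=
  SimpleGraph.fromRel (fun i j => 0 < A i j)

/-- Vertex connectivity of a multigraph: the least size of a set of vertices
whose deletion disconnects the graph or reduces it to a single vertex. -/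
noncomputable def kappa {n : ℕ} (A : Matrix (Fin n) (Fin n) ℕ) : ℕ :=
  sInf {k | ∃ S : Finset (Fin n), S.card = k ∧
    (¬ ((toSimple A).induce (↑(Sᶜ) : Set (Fin n))).Connected ∨ (Sᶜ).card = 1)}

/-- Vertex connectivity of a simple graph: the least size of a set of vertices
whose deletion disconnects the graph or reduces it to a single vertex. -/
noncomputable def kappaG {n : ℕ} (G : SimpleGraph (Fin n)) : ℕ :=
  sInf {k | ∃ S : Finset (Fin n), S.card = k ∧
    (¬ (G.induce (↑(Sᶜ) : Set (Fin n))).Connected ∨ (Sᶜ).card = 1)}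

/-- Edge connectivity of a multigraph: the least number of edges (counted with
multiplicity) whose deletion disconnects the graph.  A deleted edge multiset is
encoded by a symmetric matrix `B ≤ A`; it has `k` edges when `∑ᵢⱼ Bᵢⱼ = 2k`. -/
noncomputable def edgeConn {n : ℕ} (A : Matrix (Fin n) (Fin n) ℕ) : ℕ :=
  sInf {k | ∃ B : Matrix (Fin n) (Fin n) ℕ,
    (∀ i j, B i j ≤ A i j) ∧ (∀ i j, B i j = B j i) ∧
    (∑ i, ∑ j, B i j) = 2 * k ∧ ¬ (toSimple (A - B)).Connected}

/-- The quotient matrix `Q(d,n)` from the paper. -/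
noncomputable def Qmat (d n : ℝ) : Matrix (Fin 4) (Fin 4) ℝ :=
  !![(d+1)/2, (d-1)/2, 0, 0;
     d-1, 0, 1, 0;
     0, 1, 0, d-1;
     0, 0, (d-1)/(n-4), d-(d-1)/(n-4)]

/-- `ρ(d,n)`: the second-largest eigenvalue of `Q(d,n)`. -/
noncomputable def rho (d n : ℝ) : ℝ := lambda2 (Qmat d n)

/-- Delete one copy of the edge joining `u` and `v` from a multigraph. -/
def deleteEdge {n : ℕ} (A : Matrix (Fin n) (Fin n) ℕ) (u v : Fin n) :
    Matrix (Fin n) (Fin n) ℕ :=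
  Matrix.of fun i j => A i j - (if (i = u ∧ j = v) ∨ (i = v ∧ j = u) then 1 else 0)

section AuxProof
open Polynomial

lemma charpoly_conj {n : ℕ} (U M : Matrix (Fin n) (Fin n) ℝ)
    (h1 : U * star U = 1) (h2 : star U * U = 1) :
    (U * M * star U).charpoly = M.charpoly := by
  have hmap : ∀ N P : Matrix (Fin n) (Fin n) ℝ, (N * P).map (C : ℝ →+* ℝ[X]) = N.map C * P.map C := by
    intro N P; exact Matrix.map_mul
  have key : charmatrix (U * M * star U) = U.map C * charmatrix M * (star U).map C := by
    rw [charmatrix, charmatrix]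
    simp only [RingHom.mapMatrix_apply]
    rw [Matrix.mul_sub, Matrix.sub_mul]
    congr 1
    · have : (U.map (C : ℝ →+* ℝ[X])) * ((star U).map C) = 1 := by
        rw [← hmap, h1, Matrix.map_one _ (map_zero C) (map_one C)]
      calc (Matrix.scalar (Fin n)) X = (Matrix.scalar (Fin n)) X * (U.map C * (star U).map C) := by rw [this, mul_one]
        _ = U.map C * (Matrix.scalar (Fin n)) X * (star U).map C := by
            rw [← mul_assoc]; congr 1
            rw [Matrix.scalar_commute]
            intro r; exact Commute.all _ _
    · rw [hmap, hmap]
  rw [Matrix.charpoly, key, det_mul, det_mul, Matrix.charpoly, mul_comm (det (U.map C)), mul_assoc, ← det_mul, ← hmap, h1, Matrix.map_one _ (map_zero C) (map_one C), det_one, mul_one]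

lemma roots_charpoly {n : ℕ} (A : Matrix (Fin n) (Fin n) ℝ) (hA : A.IsHermitian) :
    A.charpoly.roots = Multiset.map hA.eigenvalues Finset.univ.val := by
  have hU := (Matrix.mem_unitaryGroup_iff).mp (Matrix.IsHermitian.eigenvectorUnitary hA).2
  have hU' := (Matrix.mem_unitaryGroup_iff').mp (Matrix.IsHermitian.eigenvectorUnitary hA).2
  have hsp := hA.spectral_theorem
  have h1 : A.charpoly = (Matrix.diagonal ((RCLike.ofReal : ℝ → ℝ) ∘ hA.eigenvalues)).charpoly := by
    conv_lhs => rw [hsp]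
    exact charpoly_conj _ _ hU hU'
  rw [h1, Matrix.charpoly_of_upperTriangular _ (Matrix.blockTriangular_diagonal _)]
  have : ∀ i : Fin n, Matrix.diagonal ((RCLike.ofReal : ℝ → ℝ) ∘ hA.eigenvalues) i i = hA.eigenvalues i := by
    intro i; simp [Matrix.diagonal_apply_eq]
  simp only [this]
  rw [show (∏ i : Fin n, (Polynomial.X - Polynomial.C (hA.eigenvalues i)))
      = ((Multiset.map hA.eigenvalues Finset.univ.val).map (fun a => Polynomial.X - Polynomial.C a)).prod by
    rw [Multiset.map_map]; rfl]
  exact Polynomial.roots_multiset_prod_X_sub_C _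

lemma le_sort_getD {n : ℕ} (hn : 2 ≤ n) (μ : Fin n → ℝ) {i j : Fin n} (hij : i ≠ j)
    {c : ℝ} (hi : c ≤ μ i) (hj : c ≤ μ j) :
    c ≤ ((Multiset.map μ Finset.univ.val).sort (· ≤ ·)).getD (n-2) 0 := by
  set m : Multiset ℝ := Multiset.map μ Finset.univ.val with hm
  set l : List ℝ := m.sort (· ≤ ·) with hl
  have hlen : l.length = n := by
    rw [hl, Multiset.length_sort, hm, Multiset.card_map]
    simp [Finset.card_univ]
  have hsorted : l.Pairwise (· ≤ ·) := Multiset.pairwise_sort _ _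
  by_contra hcon
  push_neg at hcon
  have hidx : n - 2 < l.length := by omega
  have hgetd : l.getD (n-2) 0 = l[n-2] := List.getD_eq_getElem l 0 hidx
  rw [hgetd] at hcon
  -- count of elements ≥ c is at least 2
  have hcount2 : 2 ≤ l.countP (fun x => decide (c ≤ x)) := by
    have hcoe : (l : Multiset ℝ) = m := Multiset.sort_eq _ _
    have h2 : 2 ≤ Multiset.countP (fun x => c ≤ x) m := by
      obtain ⟨s, hs⟩ := Multiset.exists_cons_of_mem (Finset.mem_val.mpr (Finset.mem_univ i : i ∈ (Finset.univ : Finset (Fin n))))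
      have hjs : j ∈ s := by
        have : j ∈ (Finset.univ : Finset (Fin n)).val := Finset.mem_val.mpr (Finset.mem_univ j)
        rw [hs, Multiset.mem_cons] at this
        exact this.resolve_left (Ne.symm hij)
      obtain ⟨t, ht⟩ := Multiset.exists_cons_of_mem hjs
      rw [hm, hs, ht]
      simp only [Multiset.map_cons, Multiset.countP_cons, hi, hj, if_pos]
      omega
    rw [← hcoe] at h2
    simpa [Multiset.coe_countP] using h2
  -- but count is at most 1
  have hcount1 : l.countP (fun x => decide (c ≤ x)) ≤ 1 := by
    have hsplit : l = l.take (n-1) ++ l.drop (n-1) := (List.take_append_drop _ _).symm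
    have htake : (l.take (n-1)).countP (fun x => decide (c ≤ x)) = 0 := by
      rw [List.countP_eq_zero]
      intro x hx
      obtain ⟨k, hk, hxk⟩ := List.getElem_of_mem hx
      have hklen : k < n - 1 := by
        have := hk; rw [List.length_take, hlen] at this; omega
      have hxl : x = l[k] := by rw [← hxk, List.getElem_take]
      have hle : l[k] ≤ l[n-2] := by
        rcases eq_or_lt_of_le (show k ≤ n-2 by omega) with h | h
        · subst h; rfl
        · exact List.pairwise_iff_getElem.mp hsorted k (n-2) (by omega) hidx h
      simp only [decide_eq_true_eq]
      intro hcx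
      rw [hxl] at hcx
      linarith
    calc l.countP (fun x => decide (c ≤ x))
        = (l.take (n-1)).countP (fun x => decide (c ≤ x)) + (l.drop (n-1)).countP (fun x => decide (c ≤ x)) := by
          conv_lhs => rw [hsplit]
          exact List.countP_append
      _ ≤ 0 + (l.drop (n-1)).length := by
          rw [htake]; exact Nat.add_le_add_left List.countP_le_length _
      _ ≤ 1 := by rw [List.length_drop, hlen]; omega
  omega

noncomputable def toE {n : ℕ} (y : Fin n → ℝ) : EuclideanSpace ℝ (Fin n) :=
  (WithLp.equiv 2 _).symm y

lemma toE_apply {n : ℕ} (y : Fin n → ℝ) (i : Fin n) : toE y i = y i := rfl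

lemma inner_toE {n : ℕ} (y z : Fin n → ℝ) :
    (inner ℝ (toE y) (toE z) : ℝ) = ∑ i, y i * z i := by
  rw [PiLp.inner_apply]; simp [RCLike.inner_apply, toE_apply]; exact Finset.sum_congr rfl fun _ _ => mul_comm _ _

section test
variable {n : ℕ} (A : Matrix (Fin n) (Fin n) ℝ) (hA : A.IsHermitian)

lemma expandQ (z : EuclideanSpace ℝ (Fin n)) :
    ∑ i, z i * (A *ᵥ (z : Fin n → ℝ)) i
      = ∑ i, hA.eigenvalues i * (inner ℝ (hA.eigenvectorBasis i) z : ℝ)^2 := by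
  set w := hA.eigenvectorBasis with hw
  set μ := hA.eigenvalues with hμ
  have hz : (inner ℝ z (toE (A *ᵥ (z : Fin n → ℝ))) : ℝ) = ∑ i, z i * (A *ᵥ (z : Fin n → ℝ)) i := by
    rw [PiLp.inner_apply]; simp [RCLike.inner_apply, toE_apply]; exact Finset.sum_congr rfl fun _ _ => mul_comm _ _
  rw [← hz, ← OrthonormalBasis.sum_inner_mul_inner w z (toE (A *ᵥ (z : Fin n → ℝ)))]
  congr 1
  funext i
  have hadj : (inner ℝ (w i) (toE (A *ᵥ (z : Fin n → ℝ))) : ℝ) = inner ℝ (toE (A *ᵥ ⇑(w i))) z := by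
    rw [PiLp.inner_apply, PiLp.inner_apply]
    simp only [RCLike.inner_apply, conj_trivial]
    rw [show (∑ x, (toE (A *ᵥ (z : Fin n → ℝ))) x * (w i) x) = ⇑(w i) ⬝ᵥ (A *ᵥ (z : Fin n → ℝ)) from Finset.sum_congr rfl fun _ _ => mul_comm _ _,
      show (∑ x, z x * (toE (A *ᵥ ⇑(w i))) x) = (A *ᵥ ⇑(w i)) ⬝ᵥ (z : Fin n → ℝ) from Finset.sum_congr rfl fun _ _ => mul_comm _ _]
    rw [Matrix.dotProduct_mulVec, ← Matrix.mulVec_transpose]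
    rw [show Aᵀ = A from hA]
  rw [hadj, hA.mulVec_eigenvectorBasis]
  have : toE (hA.eigenvalues i • ⇑(w i)) = hA.eigenvalues i • (w i) := rfl
  rw [this, inner_smul_left]
  simp only [conj_trivial, RCLike.inner_apply]
  rw [real_inner_comm z (w i)]
  ring

end test

lemma lambda2_ge {n : ℕ} (hn : 2 ≤ n) (A : Matrix (Fin n) (Fin n) ℝ) (hA : A.IsHermitian)
    (d c : ℝ)
    (hub : ∀ y : Fin n → ℝ, ∑ i, y i ^ 2 = 1 → ∑ i, y i * (A *ᵥ y) i ≤ d)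
    (y1 y2 : Fin n → ℝ)
    (h11 : ∑ i, y1 i ^ 2 = 1) (h22 : ∑ i, y2 i ^ 2 = 1) (h12 : ∑ i, y1 i * y2 i = 0)
    (hq : d + c ≤ ∑ i, y1 i * (A *ᵥ y1) i + ∑ i, y2 i * (A *ᵥ y2) i) :
    c ≤ lambda2 A := by
  classical
  set μ := hA.eigenvalues with hμ
  set w := hA.eigenvectorBasis with hw
  set z1 := toE y1
  set z2 := toE y2
  -- orthonormality of the test family
  have ho : Orthonormal ℝ ![z1, z2] := by
    rw [orthonormal_iff_ite]
    intro i j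
    fin_cases i <;> fin_cases j <;>
      simp only [Matrix.cons_val_zero, Matrix.cons_val_one, Matrix.head_cons, z1, z2, inner_toE] <;>
      [skip; skip; skip; skip]
    · refine (inner_toE y1 y1).trans ?_
      simpa [pow_two] using h11
    · refine (inner_toE y1 y2).trans ?_
      simpa using h12
    · have : ∑ i, y2 i * y1 i = 0 := by
        rw [← h12]; exact Finset.sum_congr rfl fun i _ => mul_comm _ _
      refine (inner_toE y2 y1).trans ?_
      simpa using this
    · refine (inner_toE y2 y2).trans ?_
      simpa [pow_two] using h22
  set t : Fin n → ℝ := fun i => (inner ℝ (w i) z1 : ℝ)^2 + (inner ℝ (w i) z2 : ℝ)^2 with ht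
  have tnonneg : ∀ i, 0 ≤ t i := fun i => add_nonneg (sq_nonneg _) (sq_nonneg _)
  have parseval : ∀ z : EuclideanSpace ℝ (Fin n),
      ∑ i, (inner ℝ (w i) z : ℝ)^2 = (inner ℝ z z : ℝ) := by
    intro z
    rw [← OrthonormalBasis.sum_inner_mul_inner w z z]
    exact Finset.sum_congr rfl fun i _ => by rw [real_inner_comm z (w i)]; ring
  have sumt : ∑ i, t i = 2 := by
    rw [ht]
    rw [Finset.sum_add_distrib, parseval z1, parseval z2]
    rw [show (inner ℝ z1 z1 : ℝ) = ∑ i, y1 i * y1 i from inner_toE _ _,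
      show (inner ℝ z2 z2 : ℝ) = ∑ i, y2 i * y2 i from inner_toE _ _]
    have e1 : ∑ i, y1 i * y1 i = 1 := by rw [← h11]; exact Finset.sum_congr rfl fun i _ => (pow_two _).symm
    have e2 : ∑ i, y2 i * y2 i = 1 := by rw [← h22]; exact Finset.sum_congr rfl fun i _ => (pow_two _).symm
    rw [e1, e2]; norm_num
  have tle : ∀ i, t i ≤ 1 := by
    intro i
    have hb := ho.sum_inner_products_le (w i) (s := Finset.univ)
    rw [Fin.sum_univ_two] at hb
    simp only [Matrix.cons_val_zero, Matrix.cons_val_one, Matrix.head_cons] at hb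
    have hnorm : ‖(w i : EuclideanSpace ℝ (Fin n))‖ = 1 := w.orthonormal.1 i
    rw [hnorm] at hb
    have h1 : ‖(inner ℝ z1 (w i) : ℝ)‖^2 = (inner ℝ (w i) z1 : ℝ)^2 := by
      rw [Real.norm_eq_abs, sq_abs, real_inner_comm]
    have h2 : ‖(inner ℝ z2 (w i) : ℝ)‖^2 = (inner ℝ (w i) z2 : ℝ)^2 := by
      rw [Real.norm_eq_abs, sq_abs, real_inner_comm]
    rw [h1, h2] at hb
    simpa using hb
  have μub : ∀ i, μ i ≤ d := by
    intro i
    have hAwi : A *ᵥ ⇑(w i) = μ i • ⇑(w i) := hA.mulVec_eigenvectorBasis i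
    have hnorm : ∑ x, (⇑(w i) : Fin n → ℝ) x ^ 2 = 1 := by
      have h1 : (inner ℝ (w i) (w i) : ℝ) = 1 := by
        rw [real_inner_self_eq_norm_sq, w.orthonormal.1 i]; norm_num
      rw [PiLp.inner_apply] at h1
      simp only [RCLike.inner_apply, conj_trivial] at h1
      rw [← h1]
      exact Finset.sum_congr rfl fun x _ => pow_two _
    have hle := hub (⇑(w i)) hnorm
    rw [hAwi] at hle
    have heq : ∑ x, (⇑(w i) : Fin n → ℝ) x * (μ i • ⇑(w i)) x = μ i := by
      have h2 : ∑ x, (⇑(w i) : Fin n → ℝ) x * (μ i • ⇑(w i)) x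
          = μ i * ∑ x, (⇑(w i) : Fin n → ℝ) x ^ 2 := by
        rw [Finset.mul_sum]
        exact Finset.sum_congr rfl fun x _ => by simp [Pi.smul_apply, smul_eq_mul]; ring
      rw [h2, hnorm, mul_one]
    rw [heq] at hle
    exact hle
  -- the quadratic sums in terms of eigenvalues
  have hq1 := expandQ A hA z1
  have hq2 := expandQ A hA z2
  have hqz1 : ∑ i, y1 i * (A *ᵥ y1) i = ∑ i, μ i * (inner ℝ (w i) z1 : ℝ)^2 := hq1
  have hqz2 : ∑ i, y2 i * (A *ᵥ y2) i = ∑ i, μ i * (inner ℝ (w i) z2 : ℝ)^2 := hq2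
  have hsum : d + c ≤ ∑ i, μ i * t i := by
    rw [ht]
    have : ∑ i, μ i * ((inner ℝ (w i) z1 : ℝ)^2 + (inner ℝ (w i) z2 : ℝ)^2)
        = ∑ i, μ i * (inner ℝ (w i) z1 : ℝ)^2 + ∑ i, μ i * (inner ℝ (w i) z2 : ℝ)^2 := by
      rw [← Finset.sum_add_distrib]
      exact Finset.sum_congr rfl fun i _ => by ring
    rw [this, ← hqz1, ← hqz2]
    exact hq
  -- pick the two largest eigenvalues
  have hne : (Finset.univ : Finset (Fin n)).Nonempty := ⟨⟨0, by omega⟩, Finset.mem_univ _⟩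
  obtain ⟨i0, -, hmax⟩ := Finset.exists_max_image Finset.univ μ hne
  have hne' : (Finset.univ.erase i0).Nonempty := by
    rw [← Finset.card_pos, Finset.card_erase_of_mem (Finset.mem_univ _), Finset.card_univ]
    simp only [Fintype.card_fin]; omega
  obtain ⟨i1, hi1mem, hmax1⟩ := Finset.exists_max_image (Finset.univ.erase i0) μ hne'
  have hi1ne : i1 ≠ i0 := Finset.ne_of_mem_erase hi1mem
  have hμ10 : μ i1 ≤ μ i0 := hmax i1 (Finset.mem_univ _)
  -- key bound
  have key : ∑ i, μ i * t i ≤ μ i0 + μ i1 := by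
    have hsplit : ∑ i, μ i * t i = μ i0 * t i0 + ∑ i ∈ Finset.univ.erase i0, μ i * t i :=
      (Finset.add_sum_erase _ _ (Finset.mem_univ i0)).symm
    have hsplit' : t i0 + ∑ i ∈ Finset.univ.erase i0, t i = 2 := by
      rw [Finset.add_sum_erase _ _ (Finset.mem_univ i0)]; exact sumt
    have hrest : ∑ i ∈ Finset.univ.erase i0, μ i * t i ≤ μ i1 * (2 - t i0) := by
      calc ∑ i ∈ Finset.univ.erase i0, μ i * t i
          ≤ ∑ i ∈ Finset.univ.erase i0, μ i1 * t i :=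
            Finset.sum_le_sum fun i hi => mul_le_mul_of_nonneg_right (hmax1 i hi) (tnonneg i)
        _ = μ i1 * ∑ i ∈ Finset.univ.erase i0, t i := by rw [Finset.mul_sum]
        _ = μ i1 * (2 - t i0) := by rw [show ∑ i ∈ Finset.univ.erase i0, t i = 2 - t i0 by linarith]
    rw [hsplit]
    nlinarith [tle i0, tnonneg i0, hμ10]
  have hci1 : c ≤ μ i1 := by
    have := μub i0
    linarith
  have hci0 : c ≤ μ i0 := le_trans hci1 hμ10
  -- conclude via the sorted-roots characterisation
  have hroots : A.charpoly.roots = Multiset.map μ Finset.univ.val := roots_charpoly A hA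
  rw [lambda2, eigList, hroots]
  exact le_sort_getD hn μ (Ne.symm hi1ne) hci0 hci1

end AuxProof

/-- for a connected n-vertex d-regular multigraph G with a
cut-edge e = uv whose removal leaves two connected components of sizes a and b,
λ2(G) ≥ d − 1/a − 1/b. -/
theorem stmt14 {n d : ℕ}
    (A : Matrix (Fin n) (Fin n) ℕ)
    (hsym : ∀ i j, A i j = A j i) (hdiag : ∀ i, A i i = 0)
    (hreg : ∀ i, ∑ j, A i j = d)
    (hconn : (toSimple A).Connected)
    (u v : Fin n) (huv : u ≠ v) (he : 1 ≤ A u v)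
    (S : Finset (Fin n)) (hu : u ∈ S) (hv : v ∈ Sᶜ)
    (hcross : ∀ i ∈ S, ∀ j ∈ Sᶜ, deleteEdge A u v i j = 0)
    (hc1 : ((toSimple (deleteEdge A u v)).induce (↑S : Set (Fin n))).Connected)
    (hc2 : ((toSimple (deleteEdge A u v)).induce (↑(Sᶜ) : Set (Fin n))).Connected)
    (a b : ℕ) (ha : S.card = a) (hb : (Sᶜ).card = b) :
    (d : ℝ) - 1 / (a : ℝ) - 1 / (b : ℝ) ≤
      lambda2 (A.map (fun x => (x : ℝ))) := by
  classical
  set A' : Matrix (Fin n) (Fin n) ℝ := A.map (fun x => (x : ℝ)) with hA'def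
  have hab : a + b = n := by
    rw [← ha, ← hb, Finset.card_add_card_compl, Fintype.card_fin]
  have ha1 : 1 ≤ a := by rw [← ha]; exact Finset.card_pos.mpr ⟨u, hu⟩
  have hb1 : 1 ≤ b := by rw [← hb]; exact Finset.card_pos.mpr ⟨v, hv⟩
  have hn : 2 ≤ n := by omega
  have hvnS : v ∉ S := Finset.mem_compl.mp hv
  have ha0 : (0:ℝ) < a := by exact_mod_cast ha1
  have hb0 : (0:ℝ) < b := by exact_mod_cast hb1
  have hn0 : (0:ℝ) < n := by exact_mod_cast (by omega : 0 < n)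
  have hnab : (n:ℝ) = (a:ℝ) + (b:ℝ) := by exact_mod_cast (congrArg (Nat.cast) hab).symm
  -- cross entries
  have hcr : ∀ i ∈ S, ∀ j ∈ Sᶜ, A i j = if i = u ∧ j = v then 1 else 0 := by
    intro i hi j hj
    have h := hcross i hi j hj
    simp only [deleteEdge, Matrix.of_apply] at h
    by_cases hij : i = u ∧ j = v
    · obtain ⟨hiu, hjv⟩ := hij
      subst hiu; subst hjv
      rw [if_pos ⟨rfl, rfl⟩]
      rw [if_pos (Or.inl ⟨rfl, rfl⟩)] at h
      omega
    · have hne2 : ¬(i = v ∧ j = u) := by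
        rintro ⟨hiv, -⟩
        exact hvnS (hiv ▸ hi)
      rw [if_neg (by tauto)] at h
      rw [if_neg hij]
      omega
  have hrow : ∀ i, ∑ j, A' i j = (d : ℝ) := by
    intro i
    rw [hA'def]
    have : ∑ j, (A.map (fun x => (x:ℝ))) i j = ((∑ j, A i j : ℕ) : ℝ) := by
      push_cast; rfl
    rw [this, hreg i]
  have hsymR : ∀ i j, A' i j = A' j i := by
    intro i j; simp only [hA'def, Matrix.map_apply, hsym i j]
  have hcol : ∀ j, ∑ i, A' i j = (d : ℝ) := by
    intro j
    rw [show ∑ i, A' i j = ∑ i, A' j i from Finset.sum_congr rfl fun i _ => hsymR i j]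
    exact hrow j
  have hAnn : ∀ i j, (0:ℝ) ≤ A' i j := by
    intro i j; rw [hA'def]; exact Nat.cast_nonneg _
  have hcrR : ∀ i ∈ S, ∀ j ∈ Sᶜ, A' i j = if i = u ∧ j = v then (1:ℝ) else 0 := by
    intro i hi j hj
    rw [hA'def, Matrix.map_apply, hcr i hi j hj]
    split <;> simp
  -- block sums
  have cross1 : ∑ i ∈ S, ∑ j ∈ Sᶜ, A' i j = 1 := by
    rw [Finset.sum_congr rfl fun i hi => Finset.sum_congr rfl fun j hj => hcrR i hi j hj]
    have hinner : ∀ i, ∑ j ∈ Sᶜ, (if i = u ∧ j = v then (1:ℝ) else 0)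
        = if i = u then 1 else 0 := by
      intro i
      by_cases hiu : i = u
      · rw [if_pos hiu]
        rw [show (∑ j ∈ Sᶜ, (if i = u ∧ j = v then (1:ℝ) else 0))
            = ∑ j ∈ Sᶜ, (if j = v then (1:ℝ) else 0) from
          Finset.sum_congr rfl fun j _ => by simp [hiu]]
        rw [Finset.sum_ite_eq' Sᶜ v (fun _ => (1:ℝ)), if_pos hv]
      · rw [if_neg hiu]
        exact Finset.sum_eq_zero fun j _ => by simp [hiu]
    rw [Finset.sum_congr rfl fun i _ => hinner i]
    rw [Finset.sum_ite_eq' S u (fun _ => (1:ℝ)), if_pos hu]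
  have cross2 : ∑ i ∈ Sᶜ, ∑ j ∈ S, A' i j = 1 := by
    calc ∑ i ∈ Sᶜ, ∑ j ∈ S, A' i j = ∑ j ∈ S, ∑ i ∈ Sᶜ, A' i j := Finset.sum_comm
      _ = ∑ j ∈ S, ∑ i ∈ Sᶜ, A' j i :=
          Finset.sum_congr rfl fun j _ => Finset.sum_congr rfl fun i _ => hsymR i j
      _ = 1 := cross1
  have rowS : ∑ i ∈ S, ∑ j ∈ S, A' i j = a * d - 1 := by
    have hstep : ∀ i, ∑ j ∈ S, A' i j = (d:ℝ) - ∑ j ∈ Sᶜ, A' i j := by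
      intro i
      have h := Finset.sum_add_sum_compl S (fun j => A' i j)
      rw [hrow i] at h
      linarith
    rw [Finset.sum_congr rfl fun i _ => hstep i, Finset.sum_sub_distrib, cross1,
      Finset.sum_const, ha, nsmul_eq_mul]
  have rowSc : ∑ i ∈ Sᶜ, ∑ j ∈ Sᶜ, A' i j = b * d - 1 := by
    have hstep : ∀ i, ∑ j ∈ Sᶜ, A' i j = (d:ℝ) - ∑ j ∈ S, A' i j := by
      intro i
      have h := Finset.sum_add_sum_compl S (fun j => A' i j)
      rw [hrow i] at h
      linarith
    rw [Finset.sum_congr rfl fun i _ => hstep i, Finset.sum_sub_distrib, cross2,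
      Finset.sum_const, hb, nsmul_eq_mul]
  have hA' : A'.IsHermitian := by
    ext i j
    simp only [Matrix.conjTranspose_apply, star_trivial]
    exact hsymR j i
  -- quadratic form expansion
  have hmv : ∀ (y : Fin n → ℝ) (i : Fin n), (A' *ᵥ y) i = ∑ j, A' i j * y j := fun y i => rfl
  have expand : ∀ y : Fin n → ℝ,
      ∑ i, y i * (A' *ᵥ y) i = ∑ i, ∑ j, A' i j * (y i * y j) := by
    intro y
    refine Finset.sum_congr rfl fun i _ => ?_
    rw [hmv, Finset.mul_sum]
    exact Finset.sum_congr rfl fun j _ => by ring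
  -- upper bound on the Rayleigh quotient
  have hub : ∀ y : Fin n → ℝ, ∑ i, y i ^ 2 = 1 → ∑ i, y i * (A' *ᵥ y) i ≤ (d:ℝ) := by
    intro y hy
    rw [expand]
    have hbound : ∑ i, ∑ j, A' i j * (y i * y j)
        ≤ ∑ i, ∑ j, A' i j * ((y i ^ 2 + y j ^ 2) / 2) := by
      refine Finset.sum_le_sum fun i _ => Finset.sum_le_sum fun j _ => ?_
      refine mul_le_mul_of_nonneg_left ?_ (hAnn i j)
      nlinarith [sq_nonneg (y i - y j)]
    have e1 : ∑ i, ∑ j, A' i j * y i ^ 2 = (d:ℝ) := by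
      rw [Finset.sum_congr rfl fun i (_ : i ∈ Finset.univ) => show ∑ j, A' i j * y i ^2 = (d:ℝ) * y i ^2 by
        rw [← Finset.sum_mul, hrow i]]
      rw [← Finset.mul_sum, hy, mul_one]
    have e2 : ∑ i, ∑ j, A' i j * y j ^ 2 = (d:ℝ) := by
      rw [Finset.sum_comm]
      rw [Finset.sum_congr rfl fun j (_ : j ∈ Finset.univ) => show ∑ i, A' i j * y j ^2 = (d:ℝ) * y j ^2 by
        rw [← Finset.sum_mul, hcol j]]
      rw [← Finset.mul_sum, hy, mul_one]
    have e3 : ∑ i, ∑ j, A' i j * ((y i ^ 2 + y j ^ 2) / 2) = (d:ℝ) := by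
      have : ∀ i j, A' i j * ((y i ^ 2 + y j ^ 2) / 2)
          = A' i j * y i ^2 / 2 + A' i j * y j ^2 / 2 := fun i j => by ring
      rw [Finset.sum_congr rfl fun i _ => Finset.sum_congr rfl fun j _ => this i j]
      rw [Finset.sum_congr rfl fun i (_ : i ∈ Finset.univ) => Finset.sum_add_distrib,
        Finset.sum_add_distrib]
      simp only [← Finset.sum_div]
      rw [e1, e2]; ring
    linarith
  -- test vectors
  set X : Fin n → ℝ := fun i => if i ∈ S then (b:ℝ) else -(a:ℝ) with hX
  have QX : ∑ i, ∑ j, A' i j * (X i * X j)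
      = (a*d-1)*((b:ℝ)*b) + 1*((b:ℝ)*(-(a:ℝ))) + 1*((-(a:ℝ))*(b:ℝ)) + (b*d-1)*((a:ℝ)*a) := by
    have hSS : ∑ i ∈ S, ∑ j ∈ S, A' i j * (X i * X j) = (a*d-1) * ((b:ℝ)*b) := by
      rw [Finset.sum_congr rfl fun i hi => Finset.sum_congr rfl fun j hj =>
        show A' i j * (X i * X j) = A' i j * ((b:ℝ)*b) by rw [hX]; simp only [if_pos hi, if_pos hj]]
      rw [show (∑ i ∈ S, ∑ j ∈ S, A' i j * ((b:ℝ)*b)) = (∑ i ∈ S, ∑ j ∈ S, A' i j) * ((b:ℝ)*b) by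
        rw [Finset.sum_mul]; exact Finset.sum_congr rfl fun i _ => (Finset.sum_mul _ _ _).symm]
      rw [rowS]
    have hSSc : ∑ i ∈ S, ∑ j ∈ Sᶜ, A' i j * (X i * X j) = 1 * ((b:ℝ)*(-(a:ℝ))) := by
      rw [Finset.sum_congr rfl fun i hi => Finset.sum_congr rfl fun j hj =>
        show A' i j * (X i * X j) = A' i j * ((b:ℝ)*(-(a:ℝ))) by
          rw [hX]; simp only [if_pos hi, if_neg (Finset.mem_compl.mp hj)]]
      rw [show (∑ i ∈ S, ∑ j ∈ Sᶜ, A' i j * ((b:ℝ)*(-(a:ℝ)))) = (∑ i ∈ S, ∑ j ∈ Sᶜ, A' i j) * ((b:ℝ)*(-(a:ℝ))) by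
        rw [Finset.sum_mul]; exact Finset.sum_congr rfl fun i _ => (Finset.sum_mul _ _ _).symm]
      rw [cross1]
    have hScS : ∑ i ∈ Sᶜ, ∑ j ∈ S, A' i j * (X i * X j) = 1 * ((-(a:ℝ))*(b:ℝ)) := by
      rw [Finset.sum_congr rfl fun i hi => Finset.sum_congr rfl fun j hj =>
        show A' i j * (X i * X j) = A' i j * ((-(a:ℝ))*(b:ℝ)) by
          rw [hX]; simp only [if_neg (Finset.mem_compl.mp hi), if_pos hj]]
      rw [show (∑ i ∈ Sᶜ, ∑ j ∈ S, A' i j * ((-(a:ℝ))*(b:ℝ))) = (∑ i ∈ Sᶜ, ∑ j ∈ S, A' i j) * ((-(a:ℝ))*(b:ℝ)) by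
        rw [Finset.sum_mul]; exact Finset.sum_congr rfl fun i _ => (Finset.sum_mul _ _ _).symm]
      rw [cross2]
    have hScSc : ∑ i ∈ Sᶜ, ∑ j ∈ Sᶜ, A' i j * (X i * X j) = (b*d-1) * ((a:ℝ)*a) := by
      rw [Finset.sum_congr rfl fun i hi => Finset.sum_congr rfl fun j hj =>
        show A' i j * (X i * X j) = A' i j * ((-(a:ℝ))*(-(a:ℝ))) by
          rw [hX]; simp only [if_neg (Finset.mem_compl.mp hi), if_neg (Finset.mem_compl.mp hj)]]
      rw [show (∑ i ∈ Sᶜ, ∑ j ∈ Sᶜ, A' i j * ((-(a:ℝ))*(-(a:ℝ)))) = (∑ i ∈ Sᶜ, ∑ j ∈ Sᶜ, A' i j) * ((-(a:ℝ))*(-(a:ℝ))) by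
        rw [Finset.sum_mul]; exact Finset.sum_congr rfl fun i _ => (Finset.sum_mul _ _ _).symm]
      rw [rowSc]; ring
    have houter : ∑ i, ∑ j, A' i j * (X i * X j)
        = ∑ i ∈ S, (∑ j, A' i j * (X i * X j)) + ∑ i ∈ Sᶜ, (∑ j, A' i j * (X i * X j)) :=
      (Finset.sum_add_sum_compl S _).symm
    have hinner : ∀ i, ∑ j, A' i j * (X i * X j)
        = ∑ j ∈ S, A' i j * (X i * X j) + ∑ j ∈ Sᶜ, A' i j * (X i * X j) := fun i =>
      (Finset.sum_add_sum_compl S _).symm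
    rw [houter, Finset.sum_congr rfl fun i _ => hinner i,
      Finset.sum_congr (rfl : Sᶜ = Sᶜ) fun i _ => hinner i,
      Finset.sum_add_distrib, Finset.sum_add_distrib, hSS, hSSc, hScS, hScSc]
    ring

  -- normalisation constants
  set rn : ℝ := Real.sqrt n with hrn
  set R : ℝ := Real.sqrt ((a:ℝ)*(b:ℝ)*(n:ℝ)) with hRdef
  have habn0 : (0:ℝ) < (a:ℝ)*(b:ℝ)*(n:ℝ) := by positivity
  have hR0 : 0 < R := Real.sqrt_pos.mpr habn0
  have hR2 : R * R = (a:ℝ)*(b:ℝ)*(n:ℝ) := Real.mul_self_sqrt habn0.le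
  have hrn0 : 0 < rn := Real.sqrt_pos.mpr hn0
  have hrn2 : rn * rn = (n:ℝ) := Real.mul_self_sqrt hn0.le
  have hRR : (R*R)⁻¹ = R⁻¹*R⁻¹ := mul_inv R R
  have hrnn : (rn*rn)⁻¹ = rn⁻¹*rn⁻¹ := mul_inv rn rn
  set y1 : Fin n → ℝ := fun _ => rn⁻¹ with hy1
  set y2 : Fin n → ℝ := fun i => R⁻¹ * X i with hy2
  have sumX : ∑ i, X i = 0 := by
    rw [← Finset.sum_add_sum_compl S X]
    rw [Finset.sum_congr rfl fun i hi => show X i = (b:ℝ) by rw [hX]; simp only [if_pos hi],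
      Finset.sum_congr (rfl : Sᶜ = Sᶜ) fun i hi =>
        show X i = -(a:ℝ) by rw [hX]; simp only [if_neg (Finset.mem_compl.mp hi)]]
    rw [Finset.sum_const, Finset.sum_const, ha, hb, nsmul_eq_mul, nsmul_eq_mul]
    ring
  have sumX2 : ∑ i, X i ^ 2 = (a:ℝ)*(b:ℝ)*(n:ℝ) := by
    rw [← Finset.sum_add_sum_compl S (fun i => X i ^ 2)]
    rw [Finset.sum_congr rfl fun i hi => show X i ^2 = (b:ℝ)^2 by rw [hX]; simp only [if_pos hi],
      Finset.sum_congr (rfl : Sᶜ = Sᶜ) fun i hi =>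
        show X i ^2 = (a:ℝ)^2 by rw [hX]; simp only [if_neg (Finset.mem_compl.mp hi)]; ring]
    rw [Finset.sum_const, Finset.sum_const, ha, hb, nsmul_eq_mul, nsmul_eq_mul, hnab]
    ring
  have h11 : ∑ i, y1 i ^ 2 = 1 := by
    rw [hy1]
    rw [Finset.sum_const, Finset.card_univ, Fintype.card_fin, nsmul_eq_mul]
    rw [show (rn⁻¹)^2 = (rn*rn)⁻¹ by rw [hrnn]; ring]
    rw [hrn2]
    exact mul_inv_cancel₀ hn0.ne'
  have h22 : ∑ i, y2 i ^ 2 = 1 := by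
    rw [Finset.sum_congr rfl fun i _ => show y2 i ^2 = (R*R)⁻¹ * X i ^2 by
      simp only [hy2, hRR]; ring]
    rw [← Finset.mul_sum, sumX2, hR2]
    exact inv_mul_cancel₀ habn0.ne'
  have h12 : ∑ i, y1 i * y2 i = 0 := by
    rw [Finset.sum_congr rfl fun i _ => show y1 i * y2 i = (rn⁻¹ * R⁻¹) * X i by
      rw [hy1, hy2]; ring]
    rw [← Finset.mul_sum, sumX, mul_zero]
  have sumAll : ∑ i, ∑ j, A' i j = (n:ℝ)*(d:ℝ) := by
    rw [Finset.sum_congr rfl fun i (_ : i ∈ Finset.univ) => hrow i, Finset.sum_const,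
      Finset.card_univ, Fintype.card_fin, nsmul_eq_mul]
  have q1 : ∑ i, y1 i * (A' *ᵥ y1) i = (d:ℝ) := by
    rw [expand]
    rw [Finset.sum_congr rfl fun i _ => Finset.sum_congr rfl fun j _ =>
      show A' i j * (y1 i * y1 j) = A' i j * (rn⁻¹*rn⁻¹) from rfl]
    rw [show (∑ i, ∑ j, A' i j * (rn⁻¹*rn⁻¹)) = (∑ i, ∑ j, A' i j) * (rn⁻¹*rn⁻¹) by
      rw [Finset.sum_mul]; exact Finset.sum_congr rfl fun i _ => (Finset.sum_mul _ _ _).symm]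
    rw [sumAll, show rn⁻¹*rn⁻¹ = (n:ℝ)⁻¹ by rw [← mul_inv, hrn2]]
    field_simp
  have q2 : ∑ i, y2 i * (A' *ᵥ y2) i
      = ((a:ℝ)*(b:ℝ)*(n:ℝ))⁻¹ *
        ((a*d-1)*((b:ℝ)*b) + 1*((b:ℝ)*(-(a:ℝ))) + 1*((-(a:ℝ))*(b:ℝ)) + (b*d-1)*((a:ℝ)*a)) := by
    rw [expand]
    rw [Finset.sum_congr rfl fun i _ => Finset.sum_congr rfl fun j _ =>
      show A' i j * (y2 i * y2 j) = (R*R)⁻¹ * (A' i j * (X i * X j)) by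
        simp only [hy2, hRR]; ring]
    rw [Finset.sum_congr rfl fun i (_ : i ∈ Finset.univ) => (Finset.mul_sum _ _ _).symm,
      ← Finset.mul_sum, QX, hR2]
  have main := lambda2_ge hn A' hA' (d:ℝ) ((d:ℝ) - 1/(a:ℝ) - 1/(b:ℝ)) hub y1 y2 h11 h22 h12 ?_
  · exact main
  · rw [q1, q2]
    have heq : ((a:ℝ)*(b:ℝ)*(n:ℝ))⁻¹ *
        ((a*d-1)*((b:ℝ)*b) + 1*((b:ℝ)*(-(a:ℝ))) + 1*((-(a:ℝ))*(b:ℝ)) + (b*d-1)*((a:ℝ)*a))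
        = (d:ℝ) - 1/(a:ℝ) - 1/(b:ℝ) := by
      rw [hnab]
      field_simp
      ring
    rw [heq]
end

section
/- For all integers d and n with either (d = 3 and n ≥ 19) or (d ≥ 4 and n ≥ 14), the characteristic polynomial of Q(d,n) is negative at x = d − 1/7 − 1/(n−7); that is, det(xI − Q(d,n)) < 0 at this value of x. -/
open Matrix Finset BigOperators

set_option maxHeartbeats 1000000 in
lemma my_det_fin_four (A : Matrix (Fin 4) (Fin 4) ℝ) :
    A.det =
      A 0 0 * (A 1 1 * (A 2 2 * A 3 3 - A 2 3 * A 3 2) - A 1 2 * (A 2 1 * A 3 3 - A 2 3 * A 3 1) + A 1 3 * (A 2 1 * A 3 2 - A 2 2 * A 3 1))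
    - A 0 1 * (A 1 0 * (A 2 2 * A 3 3 - A 2 3 * A 3 2) - A 1 2 * (A 2 0 * A 3 3 - A 2 3 * A 3 0) + A 1 3 * (A 2 0 * A 3 2 - A 2 2 * A 3 0))
    + A 0 2 * (A 1 0 * (A 2 1 * A 3 3 - A 2 3 * A 3 1) - A 1 1 * (A 2 0 * A 3 3 - A 2 3 * A 3 0) + A 1 3 * (A 2 0 * A 3 1 - A 2 1 * A 3 0))
    - A 0 3 * (A 1 0 * (A 2 1 * A 3 2 - A 2 2 * A 3 1) - A 1 1 * (A 2 0 * A 3 2 - A 2 2 * A 3 0) + A 1 2 * (A 2 0 * A 3 1 - A 2 1 * A 3 0)) := by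
  rw [Matrix.det_succ_row_zero, Fin.sum_univ_four]
  simp [Matrix.det_fin_three, Matrix.submatrix_apply, Fin.succAbove, Fin.lt_def, show (2:Fin 3).succ = 3 from rfl, show ((3:Fin 4):ℕ)=(3:ℕ) from rfl, Fin.castSucc, Fin.castAdd, Fin.castLE]
  norm_num
  ring

lemma my_det_fin_four_of (a b c e f g i j k l m p q r s t : ℝ) :
    Matrix.det !![a,b,c,e; f,g,i,j; k,l,m,p; q,r,s,t] =
      a * (g * (m * t - p * s) - i * (l * t - p * r) + j * (l * s - m * r))
    - b * (f * (m * t - p * s) - i * (k * t - p * q) + j * (k * s - m * q))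
    + c * (f * (l * t - p * r) - g * (k * t - p * q) + j * (k * r - l * q))
    - e * (f * (l * s - m * r) - g * (k * s - m * q) + i * (k * r - l * q)) := by
  rw [my_det_fin_four]
  norm_num [Matrix.cons_val_zero, Matrix.cons_val_one, Matrix.head_cons, Matrix.cons_val_two, Matrix.cons_val_three, Matrix.tail_cons]

set_option maxHeartbeats 2000000 in
/-- for all integers d, n with (d = 3 and n ≥ 19) or (d ≥ 4 and
n ≥ 14), we have det(xI − Q(d,n)) < 0 at x = d − 1/7 − 1/(n−7). -/
theorem stmt16 (d n : ℤ) (h : (d = 3 ∧ 19 ≤ n) ∨ (4 ≤ d ∧ 14 ≤ n)) :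
    Matrix.det
      (((d : ℝ) - 1 / 7 - 1 / ((n : ℝ) - 7)) • (1 : Matrix (Fin 4) (Fin 4) ℝ)
        - Qmat (d : ℝ) (n : ℝ)) < 0 := by
  set D : ℝ := (d : ℝ) with hD
  set N : ℝ := (n : ℝ) with hN
  have hn14 : (14 : ℝ) ≤ N := by
    rcases h with ⟨_, hn⟩ | ⟨_, hn⟩ <;>
      · rw [hN]; exact_mod_cast le_trans (by norm_num) hn
  have h7 : (0 : ℝ) < N - 7 := by linarith
  have h4 : (0 : ℝ) < N - 4 := by linarith
  have h7' : N - 7 ≠ 0 := ne_of_gt h7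
  have h4' : N - 4 ≠ 0 := ne_of_gt h4
  have key : Matrix.det
      ((D - 1 / 7 - 1 / (N - 7)) • (1 : Matrix (Fin 4) (Fin 4) ℝ)
        - Qmat D N)
      = (N ^ 2 * (144060 - 65072 * N + 9729 * N ^ 2 - 481 * N ^ 3
          + D * (-240100 + 101332 * N - 14133 * N ^ 2 + 651 * N ^ 3)
          + D ^ 2 * (96040 - 37044 * N + 4704 * N ^ 2 - 196 * N ^ 3)))
        / (4802 * (N - 7) ^ 4 * (N - 4)) := by
    have hM : (D - 1 / 7 - 1 / (N - 7)) • (1 : Matrix (Fin 4) (Fin 4) ℝ) - Qmat D N =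
        !![(D - 1/7 - 1/(N-7)) - (D+1)/2, -((D-1)/2), 0, 0;
           -(D-1), (D - 1/7 - 1/(N-7)), -1, 0;
           0, -1, (D - 1/7 - 1/(N-7)), -(D-1);
           0, 0, -((D-1)/(N-4)), (D - 1/7 - 1/(N-7)) - (D-(D-1)/(N-4))] := by
      ext i j
      fin_cases i <;> fin_cases j <;>
        simp [Qmat, Matrix.one_apply, Matrix.vecHead, Matrix.vecTail] <;> ring
    rw [hM, my_det_fin_four_of]
    field_simp
    ring
  rw [key]
  apply div_neg_of_neg_of_pos
  · have hN2 : (0 : ℝ) < N ^ 2 := by positivity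
    have hT : 144060 - 65072 * N + 9729 * N ^ 2 - 481 * N ^ 3
          + D * (-240100 + 101332 * N - 14133 * N ^ 2 + 651 * N ^ 3)
          + D ^ 2 * (96040 - 37044 * N + 4704 * N ^ 2 - 196 * N ^ 3) < 0 := by
      rcases h with ⟨hd, hn⟩ | ⟨hd, hn⟩
      · have hd' : D = 3 := by rw [hD, hd]; norm_num
        have hn' : (19 : ℝ) ≤ N := by rw [hN]; exact_mod_cast hn
        rw [hd']
        have hm : (0 : ℝ) ≤ N - 19 := by linarith
        nlinarith [mul_nonneg (mul_nonneg hm hm) hm, mul_nonneg hm hm, hm]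
      · have hd' : (4 : ℝ) ≤ D := by rw [hD]; exact_mod_cast hd
        have ha : (0 : ℝ) ≤ D - 4 := by linarith
        have hm : (0 : ℝ) ≤ N - 14 := by linarith
        nlinarith [mul_nonneg ha hm, mul_nonneg (mul_nonneg ha ha) hm,
          mul_nonneg ha (mul_nonneg hm hm), mul_nonneg (mul_nonneg hm hm) hm,
          mul_nonneg (mul_nonneg ha hm) (mul_nonneg hm hm),
          mul_nonneg (mul_nonneg (mul_nonneg ha ha) hm) (mul_nonneg hm hm),
          mul_nonneg (mul_nonneg ha ha) (mul_nonneg (mul_nonneg hm hm) hm),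
          mul_nonneg ha (mul_nonneg (mul_nonneg hm hm) hm),
          mul_nonneg (mul_nonneg ha ha) hm]
    exact mul_neg_of_pos_of_neg hN2 hT
  · positivity
end

section
/- For all integers d ≥ 3 and n ≥ 14, the matrix Q(d,n) has four real eigenvalues, its largest eigenvalue equals d, and its smallest eigenvalue is negative. -/
open Matrix Finset BigOperators

section Aux

open Polynomial

private lemma charpoly_eval (d n x : ℝ) (hn : n - 4 ≠ 0) :
    (Qmat d n).charpoly.eval x =
      (x - d) * (x^3 + ((d-1)/(n-4) - (d+1)/2)*x^2
        + (-((d-1)*((d-1)/(n-4)+d-1)/2 + 1))*x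
        + (d+1 - (d-1)/(n-4)*(d^2-3*d+4))/2) := by
  have h := (Polynomial.evalRingHom x).map_det (charmatrix (Qmat d n))
  rw [Matrix.charpoly]
  rw [show Polynomial.eval x (charmatrix (Qmat d n)).det = _ from h]
  rw [show ((evalRingHom x).mapMatrix (Qmat d n).charmatrix)
      = ((Qmat d n).charmatrix).map (eval x) from rfl]
  have hM : (Qmat d n).charmatrix.map (eval x) = !![x - (d+1)/2, -((d-1)/2), 0, 0;
      -(d-1), x, -1, 0; 0, -1, x, -(d-1); 0, 0, -((d-1)/(n-4)), x - (d-(d-1)/(n-4))] := by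
    ext i j
    fin_cases i <;> fin_cases j <;> simp [charmatrix_apply, Qmat, Matrix.one_apply]
  rw [hM, Matrix.det_succ_row_zero]
  simp [Fin.sum_univ_succ, Matrix.det_fin_three, Fin.succAbove]
  field_simp
  ring

private lemma cubic_analysis (d E : ℝ) (hd : 3 ≤ d) (hE : 0 < E) (hE10 : 10 * E ≤ d - 1) :
    ∃ r1 r2 r3 : ℝ, r1 < 0 ∧ r1 ≤ r2 ∧ r2 ≤ r3 ∧ r3 ≤ d ∧
      ((X - C d) * (X^3 + (C (E - (d+1)/2) * X^2 + C (-((d-1)*(E+d-1)/2 + 1)) * X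
        + C ((d+1 - E*(d^2-3*d+4))/2)))).roots = ↑[r1, r2, r3, d] := by
  set G : ℝ[X] := X^3 + (C (E - (d+1)/2) * X^2 + C (-((d-1)*(E+d-1)/2 + 1)) * X
        + C ((d+1 - E*(d^2-3*d+4))/2)) with hG
  have hGeval : ∀ x : ℝ, eval x G = x^3 + (E - (d+1)/2)*x^2
      + (-((d-1)*(E+d-1)/2 + 1))*x + (d+1 - E*(d^2-3*d+4))/2 := by
    intro x
    simp [hG]
    ring
  have hd1 : (0:ℝ) < d - 1 := by linarith
  -- sign evaluations
  have h1 : eval (-((d+1)/2)) G < 0 := by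
    rw [hGeval]
    nlinarith [mul_pos hd1 (show (0:ℝ) < d + 1 - 2*E by linarith)]
  have h2 : 0 < eval (-E) G := by
    rw [hGeval]
    nlinarith [mul_le_mul_of_nonneg_left hE10 hE.le]
  have h3 : eval 1 G < 0 := by
    rw [hGeval]
    nlinarith [mul_pos (mul_pos hd1 hd1) (show (0:ℝ) < E + 1 by linarith)]
  have h4 : 0 < eval d G := by
    rw [hGeval]
    nlinarith [mul_pos hE hd1, mul_pos hd1 hd1]
  have hcont : ContinuousOn (fun x : ℝ => eval x G) (Set.univ : Set ℝ) :=
    (Polynomial.continuous G).continuousOn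
  -- IVT roots
  obtain ⟨r1, hr1I, hr1⟩ := intermediate_value_Ioo
    (show -((d+1)/2) ≤ -E by linarith)
    ((Polynomial.continuous G).continuousOn) (Set.mem_Ioo.mpr ⟨h1, h2⟩)
  obtain ⟨r2, hr2I, hr2⟩ := intermediate_value_Ioo'
    (show -E ≤ 1 by linarith)
    ((Polynomial.continuous G).continuousOn) (Set.mem_Ioo.mpr ⟨h3, h2⟩)
  obtain ⟨r3, hr3I, hr3⟩ := intermediate_value_Ioo
    (show (1:ℝ) ≤ d by linarith)
    ((Polynomial.continuous G).continuousOn) (Set.mem_Ioo.mpr ⟨h3, h4⟩)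
  have hGmonic : G.Monic := by
    apply Polynomial.monic_X_pow_add
    exact lt_of_le_of_lt Polynomial.degree_quadratic_le (by decide)
  have hG0 : G ≠ 0 := hGmonic.ne_zero
  have hGdeg : G.natDegree = 3 := by
    apply Polynomial.natDegree_eq_of_degree_eq_some
    rw [hG, Polynomial.degree_add_eq_left_of_degree_lt, Polynomial.degree_X_pow]
    rw [Polynomial.degree_X_pow]
    exact lt_of_le_of_lt Polynomial.degree_quadratic_le (by decide)
  have hm1 : r1 ∈ G.roots := Polynomial.mem_roots'.mpr ⟨hG0, hr1⟩
  have hm2 : r2 ∈ G.roots := Polynomial.mem_roots'.mpr ⟨hG0, hr2⟩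
  have hm3 : r3 ∈ G.roots := Polynomial.mem_roots'.mpr ⟨hG0, hr3⟩
  have h12 : r1 < r2 := lt_trans hr1I.2 hr2I.1
  have h23 : r2 < r3 := lt_trans hr2I.2 hr3I.1
  have hsub : ({r1, r2, r3} : Multiset ℝ) ≤ G.roots := by
    apply (Multiset.le_iff_subset ?_).mpr
    · intro x hx
      simp only [Multiset.insert_eq_cons, Multiset.mem_cons, Multiset.mem_singleton] at hx
      rcases hx with rfl | rfl | rfl
      · exact hm1
      · exact hm2
      · exact hm3
    · simp only [Multiset.insert_eq_cons, Multiset.nodup_cons, Multiset.mem_cons,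
        Multiset.mem_singleton, Multiset.nodup_singleton, and_true]
      push_neg
      exact ⟨⟨ne_of_lt h12, ne_of_lt (lt_trans h12 h23)⟩, ne_of_lt h23⟩
  have hGroots : G.roots = {r1, r2, r3} := by
    have hc : Multiset.card G.roots ≤ Multiset.card ({r1, r2, r3} : Multiset ℝ) := by
      simpa using le_trans (Polynomial.card_roots' G) (le_of_eq hGdeg)
    exact (Multiset.eq_of_le_of_card_le hsub hc).symm
  refine ⟨r1, r2, r3, ?_, le_of_lt h12, le_of_lt h23, le_of_lt hr3I.2, ?_⟩
  · linarith [hr1I.2, hE]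
  · rw [Polynomial.roots_mul (mul_ne_zero (Polynomial.X_sub_C_ne_zero d) hG0),
      Polynomial.roots_X_sub_C, hGroots]
    show ({d} : Multiset ℝ) + (r1 ::ₘ r2 ::ₘ r3 ::ₘ 0) = (r1 ::ₘ r2 ::ₘ r3 ::ₘ d ::ₘ 0)
    rw [Multiset.singleton_add, Multiset.cons_swap d r1, Multiset.cons_swap d r2,
      Multiset.cons_swap d r3]

private lemma key (d n : ℝ) (hd : 3 ≤ d) (hn : 14 ≤ n) :
    Multiset.card (Qmat d n).charpoly.roots = 4 ∧
    (eigList (Qmat d n)).getD 3 0 = d ∧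
    (eigList (Qmat d n)).getD 0 0 < 0 := by
  have hn4 : (0:ℝ) < n - 4 := by linarith
  have hE : 0 < (d-1)/(n-4) := div_pos (by linarith) hn4
  have hE10 : 10 * ((d-1)/(n-4)) ≤ d - 1 := by
    have h1 : (d-1)/(n-4) * (n-4) = d - 1 := div_mul_cancel₀ _ hn4.ne'
    nlinarith [mul_le_mul_of_nonneg_left (show (10:ℝ) ≤ n - 4 by linarith) hE.le]
  obtain ⟨r1, r2, r3, h10, h12, h23, h3d, hroots⟩ :=
    cubic_analysis d ((d-1)/(n-4)) hd hE hE10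
  have hcharp : (Qmat d n).charpoly =
      (X - C d) * (X^3 + (C ((d-1)/(n-4) - (d+1)/2) * X^2
        + C (-((d-1)*((d-1)/(n-4)+d-1)/2 + 1)) * X
        + C ((d+1 - (d-1)/(n-4)*(d^2-3*d+4))/2)) : ℝ[X]) := by
    apply Polynomial.funext
    intro x
    rw [charpoly_eval d n x hn4.ne']
    simp only [Polynomial.eval_mul, Polynomial.eval_add, Polynomial.eval_sub,
      Polynomial.eval_pow, Polynomial.eval_C, Polynomial.eval_X]
    ring
  have hR : (Qmat d n).charpoly.roots = ↑[r1, r2, r3, d] := by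
    rw [hcharp]; exact hroots
  have h1d : r1 ≤ d := le_trans h12 (le_trans h23 h3d)
  have h2d : r2 ≤ d := le_trans h23 h3d
  have h13 : r1 ≤ r3 := le_trans h12 h23
  have hsorted : List.Pairwise (· ≤ ·) [r1, r2, r3, d] := by
    rw [List.pairwise_cons]
    refine ⟨?_, ?_⟩
    · intro b hb
      rcases List.mem_cons.mp hb with rfl | hb; · exact h12
      rcases List.mem_cons.mp hb with rfl | hb; · exact h13
      rcases List.mem_cons.mp hb with rfl | hb; · exact h1d
      simp at hb
    · rw [List.pairwise_cons]
      refine ⟨?_, ?_⟩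
      · intro b hb
        rcases List.mem_cons.mp hb with rfl | hb; · exact h23
        rcases List.mem_cons.mp hb with rfl | hb; · exact h2d
        simp at hb
      · rw [List.pairwise_cons]
        refine ⟨?_, ?_⟩
        · intro b hb
          rcases List.mem_cons.mp hb with rfl | hb; · exact h3d
          simp at hb
        · simp
  have heig : eigList (Qmat d n) = [r1, r2, r3, d] := by
    apply List.Perm.eq_of_pairwise' (Multiset.pairwise_sort _ _) hsorted
    rw [← Multiset.coe_eq_coe]
    rw [Multiset.sort_eq]
    exact_mod_cast hR
  refine ⟨?_, ?_, ?_⟩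
  · rw [hR]; rfl
  · rw [show eigList (Qmat d n) = _ from heig]; rfl
  · rw [show eigList (Qmat d n) = _ from heig]
    simpa using h10

end Aux

/-- for all integers d ≥ 3 and n ≥ 14, the matrix Q(d,n) has four
real eigenvalues (its characteristic polynomial has four real roots counted
with multiplicity), its largest eigenvalue equals d, and its smallest
eigenvalue is negative. -/
theorem stmt17 (d n : ℤ) (hd : 3 ≤ d) (hn : 14 ≤ n) :
    Multiset.card (Qmat (d : ℝ) (n : ℝ)).charpoly.roots = 4 ∧
    (eigList (Qmat (d : ℝ) (n : ℝ))).getD 3 0 = (d : ℝ) ∧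
    (eigList (Qmat (d : ℝ) (n : ℝ))).getD 0 0 < 0 :=
  key (d : ℝ) (n : ℝ) (by exact_mod_cast hd) (by exact_mod_cast hn)
end

section
/- Let G be a connected n-vertex d-regular multigraph with a cut-vertex v, and suppose the vertex set of G − v is partitioned into nonempty sets S₁ and S₂ of sizes s₁ and s₂ respectively, each a union of connected components of G − v. Let m₁ and m₂ be the numbers of edges (counted with multiplicity) joining v to S₁ and to S₂ respectively. Then λ2(G) ≥ (1/2)·[ d − m₁/s₁ − m₂/s₂ + √( (d − m₁/s₁ − m₂/s₂)² + 4(m₁²/s₁ + m₂²/s₂ − m₁m₂/(s₁s₂)) ) ]. -/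
open Matrix Finset BigOperators

section Stmt18Aux
open Polynomial

lemma charmatrix_diag {n : ℕ} (v : Fin n → ℝ) :
    charmatrix (Matrix.diagonal v) = Matrix.diagonal (fun i => X - C (v i)) := by
  ext i j
  by_cases h : i = j
  · subst h; simp [charmatrix_apply_eq]
  · simp [charmatrix_apply_ne _ _ _ h, Matrix.diagonal_apply_ne _ h]

lemma charpoly_eig {n : ℕ} (M : Matrix (Fin n) (Fin n) ℝ) (hM : M.IsHermitian) :
    M.charpoly = ∏ i, (X - C (hM.eigenvalues i)) := by
  set U : Matrix (Fin n) (Fin n) ℝ := (hM.eigenvectorUnitary : Matrix (Fin n) (Fin n) ℝ) with hUdef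
  have hU : U * star U = 1 := (Matrix.mem_unitaryGroup_iff).mp (hM.eigenvectorUnitary).2
  have hspec : M = U * Matrix.diagonal (RCLike.ofReal ∘ hM.eigenvalues) * star U :=
    hM.spectral_theorem
  have hev : (RCLike.ofReal ∘ hM.eigenvalues : Fin n → ℝ) = hM.eigenvalues := by
    funext i; simp [RCLike.ofReal]
  rw [hev] at hspec
  set f : Matrix (Fin n) (Fin n) ℝ →+* Matrix (Fin n) (Fin n) ℝ[X] :=
    (C : ℝ →+* ℝ[X]).mapMatrix with hf
  have hcomm : (Matrix.scalar (Fin n)) (X : ℝ[X]) * f U = f U * (Matrix.scalar (Fin n)) X :=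
    Matrix.scalar_commute (X : ℝ[X]) (fun r' => Commute.all _ _) (f U)
  have key : charmatrix M = f U * charmatrix (Matrix.diagonal hM.eigenvalues) * f (star U) := by
    rw [charmatrix, charmatrix]
    rw [mul_sub, sub_mul]
    congr 1
    · rw [← hcomm, mul_assoc, ← _root_.map_mul, hU, _root_.map_one, mul_one]
    · change _ = f U * f (Matrix.diagonal hM.eigenvalues) * f (star U)
      rw [← _root_.map_mul, ← _root_.map_mul, ← hspec]
  have hdet : M.charpoly = (charmatrix (Matrix.diagonal hM.eigenvalues)).det *
      ((f U).det * (f (star U)).det) := by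
    rw [Matrix.charpoly, key, Matrix.det_mul, Matrix.det_mul]; ring
  have hdet1 : (f U).det * (f (star U)).det = 1 := by
    rw [← Matrix.det_mul, ← _root_.map_mul, hU, _root_.map_one, Matrix.det_one]
  rw [hdet, hdet1, mul_one, charmatrix_diag, Matrix.det_diagonal]

lemma sorted_desc_two (lam : ℝ) (L : List ℝ) (hs : L.Pairwise (fun x y => y ≤ x))
    (h2 : 2 ≤ L.countP (fun x => decide (lam ≤ x))) : lam ≤ L.getD 1 0 := by
  match L with
  | [] => simp at h2
  | [x] => simp [List.countP_cons] at h2; split at h2 <;> omega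
  | x :: y :: t =>
    by_cases hy : lam ≤ y
    · simpa using hy
    · exfalso
      have hyt : ∀ z ∈ y :: t, ¬ (lam ≤ z) := by
        intro z hz
        rcases List.mem_cons.mp hz with h | h
        · subst h; exact hy
        · have hzy : z ≤ y := (List.pairwise_cons.mp (List.pairwise_cons.mp hs).2).1 z h
          intro hlz; exact hy (hlz.trans hzy)
      have h0 : (y :: t).countP (fun x => decide (lam ≤ x)) = 0 := by
        rw [List.countP_eq_zero]
        intro a ha; simpa using hyt a ha
      rw [List.countP_cons, h0] at h2
      split at h2 <;> omega

lemma two_eigs_le {n : ℕ} (M : Matrix (Fin n) (Fin n) ℝ) (hM : M.IsHermitian)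
    (hn : 2 ≤ n) (lam : ℝ) (i j : Fin n) (hij : i ≠ j)
    (hi : lam ≤ hM.eigenvalues i) (hj : lam ≤ hM.eigenvalues j) :
    lam ≤ lambda2 M := by
  have hroots : M.charpoly.roots = Multiset.map hM.eigenvalues Finset.univ.val := by
    rw [charpoly_eig M hM]
    have : (∏ k, (X - C (hM.eigenvalues k))) =
        ((Multiset.map hM.eigenvalues Finset.univ.val).map fun a => X - C a).prod := by
      rw [Multiset.map_map]
      rfl
    rw [this, roots_multiset_prod_X_sub_C]
  set L : List ℝ := eigList M with hL
  have hLlen : L.length = n := by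
    rw [hL, eigList, Multiset.length_sort, hroots, Multiset.card_map]
    simp
  have hLsorted : L.Pairwise (· ≤ ·) := Multiset.pairwise_sort _ _
  have hrevsorted : L.reverse.Pairwise (fun x y => y ≤ x) := by
    rw [List.pairwise_reverse]
    exact hLsorted
  have hcount : 2 ≤ L.reverse.countP (fun x => decide (lam ≤ x)) := by
    rw [List.countP_reverse]
    have hLms : (L : Multiset ℝ) = M.charpoly.roots := Multiset.sort_eq _ _
    have : L.countP (fun x => decide (lam ≤ x)) =
        Multiset.countP (fun x => lam ≤ x) (Multiset.map hM.eigenvalues Finset.univ.val) := by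
      rw [← hroots, ← hLms]
      rfl
    rw [this, Multiset.countP_map]
    have hsub : 2 ≤ (Finset.univ.filter (fun k => lam ≤ hM.eigenvalues k)).card := by
      apply Finset.one_lt_card.mpr
      exact ⟨i, Finset.mem_filter.mpr ⟨Finset.mem_univ _, hi⟩,
             j, Finset.mem_filter.mpr ⟨Finset.mem_univ _, hj⟩, hij⟩
    exact le_trans hsub (le_of_eq rfl)
  have hgd : lam ≤ L.reverse.getD 1 0 := sorted_desc_two lam L.reverse hrevsorted hcount
  have hidx : L.reverse.getD 1 0 = L.getD (n - 2) 0 := by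
    have h1 : 1 < L.reverse.length := by rw [List.length_reverse, hLlen]; omega
    have h2' : n - 2 < L.length := by rw [hLlen]; omega
    rw [List.getD_eq_getElem _ _ h1, List.getD_eq_getElem _ _ h2', List.getElem_reverse]
    congr 1
    omega
  rw [lambda2, ← hL, ← hidx]
  exact hgd

lemma lam_le_lambda2 {n : ℕ} (M : Matrix (Fin n) (Fin n) ℝ) (hM : M.IsHermitian)
    (hn : 2 ≤ n) (lam : ℝ) (z x : Fin n → ℝ)
    (hz : z ≠ 0) (hx : x ≠ 0) (hzx : z ⬝ᵥ x = 0)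
    (hqz : lam * (z ⬝ᵥ z) ≤ z ⬝ᵥ (M *ᵥ z)) (hqx : lam * (x ⬝ᵥ x) ≤ x ⬝ᵥ (M *ᵥ x))
    (hcz : z ⬝ᵥ (M *ᵥ x) = 0) (hcx : x ⬝ᵥ (M *ᵥ z) = 0) :
    lam ≤ lambda2 M := by
  by_contra hcon
  push_neg at hcon
  set μ := hM.eigenvalues with hμ
  have hH : ∀ i j : Fin n, i ≠ j → lam ≤ μ i → lam ≤ μ j → False := fun i j hij hi hj =>
    absurd (two_eigs_le M hM hn lam i j hij hi hj) (not_le.mpr hcon)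
  -- spectral setup
  set U : Matrix (Fin n) (Fin n) ℝ := (hM.eigenvectorUnitary : Matrix (Fin n) (Fin n) ℝ)
    with hUdef
  have hstar : star U = Uᵀ := by
    ext i j; simp [Matrix.star_apply]
  have hUU : U * Uᵀ = 1 := by
    rw [← hstar]; exact (Matrix.mem_unitaryGroup_iff).mp (hM.eigenvectorUnitary).2
  have hev : (RCLike.ofReal ∘ μ : Fin n → ℝ) = μ := by funext i; simp [RCLike.ofReal]
  have hspec : M = U * Matrix.diagonal μ * Uᵀ := by
    rw [← hstar, ← hev]; exact hM.spectral_theorem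
  -- transform
  set w : (Fin n → ℝ) → (Fin n → ℝ) := fun y => Uᵀ *ᵥ y with hw
  have hq : ∀ y : Fin n → ℝ, y ⬝ᵥ (M *ᵥ y) = ∑ i, μ i * (w y i)^2 := by
    intro y
    rw [hspec, ← Matrix.mulVec_mulVec, ← Matrix.mulVec_mulVec, Matrix.dotProduct_mulVec,
      ← Matrix.mulVec_transpose]
    rw [dotProduct, Finset.sum_congr rfl]
    intro i _
    rw [Matrix.mulVec_diagonal]
    ring
  have hnorm : ∀ y : Fin n → ℝ, y ⬝ᵥ y = ∑ i, (w y i)^2 := by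
    intro y
    have h1 : ∑ i, (w y i)^2 = (w y) ⬝ᵥ (w y) := by
      simp [dotProduct, sq]
    rw [h1, hw]
    simp only
    rw [Matrix.dotProduct_mulVec, Matrix.vecMul_transpose, Matrix.mulVec_mulVec, hUU,
      Matrix.one_mulVec]
  -- linearity of w
  have hwlin : ∀ (c₁ c₂ : ℝ) (y₁ y₂ : Fin n → ℝ),
      w (c₁ • y₁ + c₂ • y₂) = c₁ • w y₁ + c₂ • w y₂ := by
    intro c₁ c₂ y₁ y₂
    simp only [hw, Matrix.mulVec_add, Matrix.mulVec_smul]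
  -- choose i₀
  have hnpos : 0 < n := by omega
  obtain ⟨i₀, hi₀⟩ : ∃ i₀ : Fin n, ∀ i : Fin n, i ≠ i₀ → μ i < lam := by
    by_cases hex : ∃ k, lam ≤ μ k
    · obtain ⟨k, hk⟩ := hex
      exact ⟨k, fun i hik => not_le.mp (fun hi => hH i k hik hi hk)⟩
    · push_neg at hex
      exact ⟨⟨0, hnpos⟩, fun i _ => hex i⟩
  -- choose coefficients
  set p : ℝ := w z i₀ with hp
  set qq : ℝ := w x i₀ with hqq
  obtain ⟨c₁, c₂, hcne, hci₀⟩ : ∃ c₁ c₂ : ℝ, ¬(c₁ = 0 ∧ c₂ = 0) ∧ c₁ * p + c₂ * qq = 0 := by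
    by_cases hpq : p = 0 ∧ qq = 0
    · exact ⟨1, 0, by simp, by simp [hpq.1, hpq.2]⟩
    · exact ⟨qq, -p, by rintro ⟨h1, h2⟩; exact hpq ⟨by linarith [neg_eq_zero.mp h2], h1⟩,
        by ring⟩
  set y : Fin n → ℝ := c₁ • z + c₂ • x with hy
  have hwy : w y = c₁ • w z + c₂ • w x := hwlin c₁ c₂ z x
  have hwyi₀ : w y i₀ = 0 := by
    rw [hwy]; simpa using hci₀
  -- expansion of quadratic form of y
  have hxz : x ⬝ᵥ z = 0 := by rw [dotProduct_comm]; exact hzx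
  have e1 : y ⬝ᵥ (M *ᵥ y) = c₁^2 * (z ⬝ᵥ (M *ᵥ z)) + c₂^2 * (x ⬝ᵥ (M *ᵥ x)) := by
    simp only [hy, Matrix.mulVec_add, Matrix.mulVec_smul, dotProduct_add,
      add_dotProduct, smul_dotProduct, dotProduct_smul,
      smul_eq_mul, hcz, hcx]
    ring
  have e2 : y ⬝ᵥ y = c₁^2 * (z ⬝ᵥ z) + c₂^2 * (x ⬝ᵥ x) := by
    simp only [hy, dotProduct_add, add_dotProduct, smul_dotProduct,
      dotProduct_smul, smul_eq_mul, hzx, hxz]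
    ring
  -- y is nonzero
  have hzz : 0 < z ⬝ᵥ z := by
    have hnn : 0 ≤ z ⬝ᵥ z := Finset.sum_nonneg fun i _ => mul_self_nonneg (z i)
    rcases lt_or_eq_of_le hnn with h | h
    · exact h
    · exact absurd (dotProduct_self_eq_zero.mp h.symm) hz
  have hxx : 0 < x ⬝ᵥ x := by
    have hnn : 0 ≤ x ⬝ᵥ x := Finset.sum_nonneg fun i _ => mul_self_nonneg (x i)
    rcases lt_or_eq_of_le hnn with h | h
    · exact h
    · exact absurd (dotProduct_self_eq_zero.mp h.symm) hx
  have hyy : 0 < y ⬝ᵥ y := by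
    rw [e2]
    rcases not_and_or.mp hcne with h | h
    · have : 0 < c₁^2 := by positivity
      nlinarith [sq_nonneg c₂]
    · have : 0 < c₂^2 := by positivity
      nlinarith [sq_nonneg c₁]
  have hyne : y ≠ 0 := fun h => by rw [h] at hyy; simp at hyy
  -- strict inequality from eigenvalues
  have hwyne : w y ≠ 0 := by
    intro h
    rw [hnorm y, h] at hyy
    simp at hyy
  obtain ⟨i₁, hi₁⟩ : ∃ i₁ : Fin n, w y i₁ ≠ 0 := by
    by_contra hc
    push_neg at hc
    exact hwyne (funext hc)
  have hi₁ne : i₁ ≠ i₀ := fun h => hi₁ (h ▸ hwyi₀)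
  have hstrict : y ⬝ᵥ (M *ᵥ y) < lam * (y ⬝ᵥ y) := by
    rw [hq y, hnorm y, Finset.mul_sum]
    apply Finset.sum_lt_sum
    · intro i _
      by_cases hii : i = i₀
      · subst hii; rw [hwyi₀]; simp
      · exact mul_le_mul_of_nonneg_right (le_of_lt (hi₀ i hii)) (sq_nonneg _)
    · exact ⟨i₁, Finset.mem_univ _, mul_lt_mul_of_pos_right (hi₀ i₁ hi₁ne)
        (by positivity)⟩
  -- but quadratic form is ≥ lam * ‖y‖²
  have hge : lam * (y ⬝ᵥ y) ≤ y ⬝ᵥ (M *ᵥ y) := by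
    rw [e1, e2]
    nlinarith [mul_le_mul_of_nonneg_left hqz (sq_nonneg c₁),
      mul_le_mul_of_nonneg_left hqx (sq_nonneg c₂)]
  linarith

lemma keyE (d s1 s2 m1 m2 lam : ℝ) (hs1 : 0 < s1) (hs2 : 0 < s2) (hd : m1 + m2 = d)
    (hrel : lam^2 * (s1*s2) = (d*s1*s2 - m1*s2 - m2*s1) * lam
      + (m1^2*s2 + m2^2*s1 - m1*m2)) :
    ∃ a b : ℝ, ¬(a = 0 ∧ b = 0) ∧
      a^2*(d*s1-m1) + b^2*(d*s2-m2) + 2*(-(a*s1+b*s2))*(a*m1+b*m2)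
        - lam*(a^2*s1+b^2*s2+(a*s1+b*s2)^2) = 0 := by
  set Q11 : ℝ := d*s1 - m1 - 2*s1*m1 - lam*(s1 + s1^2) with hQ11
  set Q22 : ℝ := d*s2 - m2 - 2*s2*m2 - lam*(s2 + s2^2) with hQ22
  set Q12 : ℝ := -(s1*m2 + s2*m1) - lam*(s1*s2) with hQ12
  have hs12 : (s1*s2 : ℝ) ≠ 0 := by positivity
  have hdet : Q11 * Q22 - Q12^2 = 0 := by
    have h : s1*s2*(Q11*Q22 - Q12^2) = s1*s2*0 := by
      rw [mul_zero, hQ11, hQ22, hQ12]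
      linear_combination (s1*s2 + s1*s2^2 + s1^2*s2) * hrel +
        (s1*s2^2*m1 + s1^2*s2*m2 + s1^2*s2^2*lam + s1^2*s2^2*m2 + s1^2*s2^2*m1
          - d*s1^2*s2^2) * hd
    exact mul_left_cancel₀ hs12 h
  by_cases hz : Q22 = 0 ∧ Q12 = 0
  · refine ⟨0, 1, by simp, ?_⟩
    have h2 : Q22 = 0 := hz.1
    rw [hQ22] at h2
    linear_combination h2
  · refine ⟨Q22, -Q12, ?_, ?_⟩
    · rintro ⟨h1, h2⟩
      exact hz ⟨h1, by linarith [neg_eq_zero.mp h2]⟩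
    · have expand : Q22^2*(d*s1-m1) + (-Q12)^2*(d*s2-m2)
          + 2*(-(Q22*s1+(-Q12)*s2))*(Q22*m1+(-Q12)*m2)
          - lam*(Q22^2*s1+(-Q12)^2*s2+(Q22*s1+(-Q12)*s2)^2)
          = Q22 * (Q11*Q22 - Q12^2) := by
        rw [hQ11, hQ22, hQ12]; ring
      rw [expand, hdet, mul_zero]

end Stmt18Aux

/-- for a connected n-vertex d-regular multigraph G with a
cut-vertex v, with the vertices of G − v partitioned into nonempty sets S₁ and
S₂ (of sizes s₁, s₂), each a union of connected components of G − v, and with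
m₁, m₂ the numbers of edges from v to S₁ and S₂,
λ2(G) ≥ (1/2)[d − m₁/s₁ − m₂/s₂ + √((d − m₁/s₁ − m₂/s₂)² +
4(m₁²/s₁ + m₂²/s₂ − m₁m₂/(s₁s₂)))]. -/
theorem stmt18 {n d : ℕ}
    (A : Matrix (Fin n) (Fin n) ℕ)
    (hsym : ∀ i j, A i j = A j i) (hdiag : ∀ i, A i i = 0)
    (hreg : ∀ i, ∑ j, A i j = d)
    (hconn : (toSimple A).Connected)
    (v : Fin n)
    (hcut : ¬ ((toSimple A).induce ({v}ᶜ : Set (Fin n))).Connected)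
    (S₁ S₂ : Finset (Fin n)) (h1 : S₁.Nonempty) (h2 : S₂.Nonempty)
    (hdisj : Disjoint S₁ S₂) (hunion : S₁ ∪ S₂ = ({v} : Finset (Fin n))ᶜ)
    (hcomp : ∀ i ∈ S₁, ∀ j ∈ S₂, A i j = 0)
    (s₁ s₂ : ℕ) (hs₁ : s₁ = S₁.card) (hs₂ : s₂ = S₂.card)
    (m₁ m₂ : ℕ) (hm₁ : m₁ = ∑ j ∈ S₁, A v j) (hm₂ : m₂ = ∑ j ∈ S₂, A v j) :
    (1 / 2 : ℝ) *
      ((d : ℝ) - (m₁ : ℝ) / (s₁ : ℝ) - (m₂ : ℝ) / (s₂ : ℝ) +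
        Real.sqrt
          (((d : ℝ) - (m₁ : ℝ) / (s₁ : ℝ) - (m₂ : ℝ) / (s₂ : ℝ)) ^ 2 +
            4 * ((m₁ : ℝ) ^ 2 / (s₁ : ℝ) + (m₂ : ℝ) ^ 2 / (s₂ : ℝ) -
              (m₁ : ℝ) * (m₂ : ℝ) / ((s₁ : ℝ) * (s₂ : ℝ))))) ≤
      lambda2 (A.map (fun x => (x : ℝ))) := by
  -- abbreviations
  set M : Matrix (Fin n) (Fin n) ℝ := A.map (fun x => (x : ℝ)) with hMdef
  set dR : ℝ := (d : ℝ) with hdR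
  set s1 : ℝ := (s₁ : ℝ) with hs1R
  set s2 : ℝ := (s₂ : ℝ) with hs2R
  set m1 : ℝ := (m₁ : ℝ) with hm1R
  set m2 : ℝ := (m₂ : ℝ) with hm2R
  set T : ℝ := dR - m1/s1 - m2/s2 with hT
  set Cc : ℝ := m1^2/s1 + m2^2/s2 - m1*m2/(s1*s2) with hCc
  set R : ℝ := Real.sqrt (T^2 + 4*Cc) with hR
  set lam : ℝ := (1/2) * (T + R) with hlam
  show lam ≤ lambda2 M
  clear_value dR s1 s2 m1 m2 T Cc R lam
  -- cardinalities
  have hvc : ({v} : Finset (Fin n)) ∪ (S₁ ∪ S₂) = Finset.univ := by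
    rw [hunion]; exact Finset.union_compl _
  have hdisjv : Disjoint ({v} : Finset (Fin n)) (S₁ ∪ S₂) := by
    rw [hunion]; exact disjoint_compl_right
  have hcard : n = 1 + (s₁ + s₂) := by
    have h := congrArg Finset.card hvc
    rw [Finset.card_union_of_disjoint hdisjv, Finset.card_union_of_disjoint hdisj,
      Finset.card_singleton, Finset.card_univ, Fintype.card_fin] at h
    rw [hs₁, hs₂]; omega
  have hs₁pos : 0 < s₁ := by rw [hs₁]; exact Finset.card_pos.mpr h1
  have hs₂pos : 0 < s₂ := by rw [hs₂]; exact Finset.card_pos.mpr h2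
  have hn : 2 ≤ n := by omega
  have hs1pos : (0:ℝ) < s1 := by rw [hs1R]; exact_mod_cast hs₁pos
  have hs2pos : (0:ℝ) < s2 := by rw [hs2R]; exact_mod_cast hs₂pos
  -- membership facts
  have hv1 : v ∉ S₁ := by
    intro h
    have : v ∈ ({v} : Finset (Fin n))ᶜ := hunion ▸ Finset.mem_union_left S₂ h
    simp at this
  have hv2 : v ∉ S₂ := by
    intro h
    have : v ∈ ({v} : Finset (Fin n))ᶜ := hunion ▸ Finset.mem_union_right S₁ h
    simp at this
  -- sum splitting
  have hsplit : ∀ f : Fin n → ℝ,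
      ∑ i, f i = f v + (∑ i ∈ S₁, f i + ∑ i ∈ S₂, f i) := by
    intro f
    calc ∑ i, f i = ∑ i ∈ ({v} : Finset (Fin n)) ∪ (S₁ ∪ S₂), f i := by rw [hvc]
    _ = ∑ i ∈ ({v} : Finset (Fin n)), f i + ∑ i ∈ S₁ ∪ S₂, f i :=
        Finset.sum_union hdisjv
    _ = f v + (∑ i ∈ S₁, f i + ∑ i ∈ S₂, f i) := by
        rw [Finset.sum_singleton, Finset.sum_union hdisj]
  -- basic real identities
  have hrow : ∀ i, ∑ j, (A i j : ℝ) = dR := by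
    intro i
    rw [hdR, ← Nat.cast_sum]
    exact_mod_cast hreg i
  have hm1S : (∑ j ∈ S₁, (A v j : ℝ)) = m1 := by
    rw [hm1R, hm₁]; push_cast; rfl
  have hm2S : (∑ j ∈ S₂, (A v j : ℝ)) = m2 := by
    rw [hm2R, hm₂]; push_cast; rfl
  have hm1S' : (∑ i ∈ S₁, (A i v : ℝ)) = m1 := by
    rw [← hm1S]; exact Finset.sum_congr rfl fun i _ => by rw [hsym]
  have hm2S' : (∑ i ∈ S₂, (A i v : ℝ)) = m2 := by
    rw [← hm2S]; exact Finset.sum_congr rfl fun i _ => by rw [hsym]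
  have hcard1 : (∑ _i ∈ S₁, (1:ℝ)) = s1 := by
    rw [Finset.sum_const, hs1R, hs₁]; simp
  have hcard2 : (∑ _i ∈ S₂, (1:ℝ)) = s2 := by
    rw [Finset.sum_const, hs2R, hs₂]; simp
  have hdm : m1 + m2 = dR := by
    have := hsplit (fun j => (A v j : ℝ))
    rw [hrow v, hm1S, hm2S] at this
    simp only [hdiag v] at this
    push_cast at this
    linarith
  have hrow1 : ∀ i ∈ S₁, ∑ j ∈ S₁, (A i j : ℝ) = dR - (A i v : ℝ) := by
    intro i hi
    have h := hsplit (fun j => (A i j : ℝ))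
    rw [hrow i] at h
    have h2 : ∑ j ∈ S₂, (A i j : ℝ) = 0 := by
      apply Finset.sum_eq_zero
      intro j hj
      rw [hcomp i hi j hj]; simp
    rw [h2] at h
    have hvi : (A i v : ℝ) = (A v i : ℝ) := by rw [hsym]
    linarith [h]
  have hrow2 : ∀ i ∈ S₂, ∑ j ∈ S₂, (A i j : ℝ) = dR - (A i v : ℝ) := by
    intro i hi
    have h := hsplit (fun j => (A i j : ℝ))
    rw [hrow i] at h
    have h2 : ∑ j ∈ S₁, (A i j : ℝ) = 0 := by
      apply Finset.sum_eq_zero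
      intro j hj
      rw [hsym, hcomp j hj i hi]; simp
    rw [h2] at h
    linarith [h]
  have hcomp1 : ∀ i ∈ S₁, ∑ j ∈ S₂, (A i j : ℝ) = 0 := by
    intro i hi; apply Finset.sum_eq_zero; intro j hj; rw [hcomp i hi j hj]; simp
  have hcomp2 : ∀ i ∈ S₂, ∑ j ∈ S₁, (A i j : ℝ) = 0 := by
    intro i hi; apply Finset.sum_eq_zero; intro j hj; rw [hsym, hcomp j hj i hi]; simp
  -- algebraic facts about lam
  have hs1ne : s1 ≠ 0 := ne_of_gt hs1pos
  have hs2ne : s2 ≠ 0 := ne_of_gt hs2pos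
  have hm1nn : (0:ℝ) ≤ m1 := by rw [hm1R]; positivity
  have hm2nn : (0:ℝ) ≤ m2 := by rw [hm2R]; positivity
  have hCc' : Cc = (m1^2*s2 + m2^2*s1 - m1*m2)/(s1*s2) := by
    rw [hCc]; field_simp
  have hs1ge1 : (1:ℝ) ≤ s1 := by
    rw [hs1R]; exact_mod_cast hs₁pos
  have hs2ge1 : (1:ℝ) ≤ s2 := by
    rw [hs2R]; exact_mod_cast hs₂pos
  have hCnn : 0 ≤ Cc := by
    rw [hCc']
    apply div_nonneg _ (by positivity)
    have k1 : m1^2 ≤ m1^2*s2 := le_mul_of_one_le_right (sq_nonneg _) hs2ge1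
    have k2 : m2^2 ≤ m2^2*s1 := le_mul_of_one_le_right (sq_nonneg _) hs1ge1
    have ksq : m1^2 - 2*(m1*m2) + m2^2 = (m1-m2)^2 := by ring
    linarith [sq_nonneg (m1-m2), ksq, k1, k2, mul_nonneg hm1nn hm2nn]
  have hdisc : 0 ≤ T^2 + 4*Cc := by linarith [sq_nonneg T, hCnn]
  have hsq : R^2 = T^2 + 4*Cc := by rw [hR]; exact Real.sq_sqrt hdisc
  have hlam2 : lam^2 = T*lam + Cc := by rw [hlam]; linear_combination (1/4)*hsq
  have hTs : T * (s1*s2) = dR*s1*s2 - m1*s2 - m2*s1 := by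
    rw [hT]; field_simp
  have hCs : Cc * (s1*s2) = m1^2*s2 + m2^2*s1 - m1*m2 := by
    rw [hCc]; field_simp
  have hrel : lam^2 * (s1*s2) = (dR*s1*s2 - m1*s2 - m2*s1) * lam
      + (m1^2*s2 + m2^2*s1 - m1*m2) := by
    linear_combination (s1*s2)*hlam2 + lam*hTs + hCs
  have hm1led : m1 ≤ dR := by linarith
  have hm2led : m2 ≤ dR := by linarith
  have hdnn : 0 ≤ dR := le_trans hm1nn hm1led
  have hu1 : 0 ≤ m1/s1 := by positivity
  have hu2 : 0 ≤ m2/s2 := by positivity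
  have hTled : T ≤ dR := by rw [hT]; linarith
  have hlamled : lam ≤ dR := by
    have h0 : 0 ≤ dR*(m1/s1 + m2/s2) - Cc := by
      have e : dR*(m1/s1 + m2/s2) - Cc
          = ((dR - m1)*m1*s2 + (dR - m2)*m2*s1 + m1*m2)/(s1*s2) := by
        rw [hCc]; field_simp; ring
      rw [e]
      apply div_nonneg _ (by positivity)
      have t1 : 0 ≤ (dR - m1)*m1*s2 := by
        apply mul_nonneg (mul_nonneg (by linarith) hm1nn) (by positivity)
      have t2 : 0 ≤ (dR - m2)*m2*s1 := by
        apply mul_nonneg (mul_nonneg (by linarith) hm2nn) (by positivity)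
      linarith [t1, t2, mul_nonneg hm1nn hm2nn]
    have hdT : dR - T = m1/s1 + m2/s2 := by rw [hT]; ring
    have hkey : T^2 + 4*Cc ≤ (2*dR - T)^2 := by
      have expand : (2*dR - T)^2 - (T^2 + 4*Cc) = 4*(dR*(dR - T) - Cc) := by ring
      have hlink : dR*(dR - T) - Cc = dR*(m1/s1 + m2/s2) - Cc := by rw [hdT]
      linarith [expand, hlink, h0]
    have hRle : R ≤ 2*dR - T := by
      rw [hR]
      calc Real.sqrt (T^2 + 4*Cc) ≤ Real.sqrt ((2*dR - T)^2) := Real.sqrt_le_sqrt hkey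
      _ = 2*dR - T := Real.sqrt_sq (by linarith)
    rw [hlam]; linarith
  -- the hermitian matrix
  have hM : M.IsHermitian := by
    apply Matrix.ext
    intro i j
    rw [hMdef]
    simp only [Matrix.conjTranspose_apply, Matrix.map_apply, star_trivial]
    exact_mod_cast hsym j i
  -- test vectors
  obtain ⟨a, b, hcne, hE⟩ := keyE dR s1 s2 m1 m2 lam hs1pos hs2pos hdm hrel
  set gam : ℝ := -(a*s1 + b*s2) with hgam
  set z : Fin n → ℝ := fun _ => 1 with hz0
  set x : Fin n → ℝ := fun i => if i ∈ S₁ then a else if i ∈ S₂ then b else gam with hx0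
  have hxS1 : ∀ i ∈ S₁, x i = a := by intro i hi; rw [hx0]; simp [hi]
  have hxS2 : ∀ i ∈ S₂, x i = b := by
    intro i hi
    have hi1 : i ∉ S₁ := Finset.disjoint_right.mp hdisj hi
    rw [hx0]; simp [hi, hi1]
  have hxv : x v = gam := by rw [hx0]; simp [hv1, hv2]
  have hsum1 : ∀ c : ℝ, (∑ _i ∈ S₁, c) = s1 * c := by
    intro c; rw [Finset.sum_const, nsmul_eq_mul, hs1R, hs₁]
  have hsum2 : ∀ c : ℝ, (∑ _i ∈ S₂, c) = s2 * c := by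
    intro c; rw [Finset.sum_const, nsmul_eq_mul, hs2R, hs₂]
  have hxsum : ∑ i, x i = 0 := by
    rw [hsplit x, hxv, Finset.sum_congr rfl hxS1, Finset.sum_congr rfl hxS2,
      hsum1 a, hsum2 b, hgam]
    ring
  have hzne : z ≠ 0 := by
    intro h
    have := congrFun h v
    rw [hz0] at this
    simp at this
  have hxne : x ≠ 0 := by
    intro h
    rcases not_and_or.mp hcne with ha | hb
    · obtain ⟨i, hi⟩ := h1
      have := congrFun h i
      rw [hxS1 i hi] at this
      exact ha this
    · obtain ⟨i, hi⟩ := h2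
      have := congrFun h i
      rw [hxS2 i hi] at this
      exact hb this
  have hzx : z ⬝ᵥ x = 0 := by
    rw [dotProduct]
    simp only [hz0, one_mul]
    exact hxsum
  have hMz : M *ᵥ z = fun _ => dR := by
    funext i
    rw [Matrix.mulVec, dotProduct]
    simp only [hz0, mul_one, hMdef, Matrix.map_apply]
    exact hrow i
  have hzz : z ⬝ᵥ z = (n : ℝ) := by
    rw [dotProduct]
    simp [hz0]
  have hqz : lam * (z ⬝ᵥ z) ≤ z ⬝ᵥ (M *ᵥ z) := by
    rw [hzz, hMz, dotProduct]
    simp only [hz0, one_mul, Finset.sum_const, Finset.card_univ, Fintype.card_fin,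
      nsmul_eq_mul]
    have : lam * (n:ℝ) ≤ dR * (n:ℝ) := by
      apply mul_le_mul_of_nonneg_right hlamled (by positivity)
    linarith
  have hcx : x ⬝ᵥ (M *ᵥ z) = 0 := by
    rw [hMz, dotProduct]
    have : ∑ i, x i * dR = (∑ i, x i) * dR := by rw [Finset.sum_mul]
    rw [this, hxsum, zero_mul]
  have hcz : z ⬝ᵥ (M *ᵥ x) = 0 := by
    have hh1 : z ⬝ᵥ (M *ᵥ x) = ∑ i, ∑ j, (A i j : ℝ) * x j := by
      rw [dotProduct]
      simp only [hz0, one_mul]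
      apply Finset.sum_congr rfl
      intro i _
      rw [Matrix.mulVec, dotProduct]
      apply Finset.sum_congr rfl
      intro j _
      rw [hMdef]
      rfl
    rw [hh1, Finset.sum_comm]
    have hh2 : ∀ j, ∑ i, (A i j : ℝ) * x j = dR * x j := by
      intro j
      rw [← Finset.sum_mul]
      congr 1
      rw [← hrow j]
      exact Finset.sum_congr rfl fun i _ => by rw [hsym]
    rw [Finset.sum_congr rfl fun j _ => hh2 j, ← Finset.mul_sum, hxsum, mul_zero]
  -- row values of M *ᵥ x
  have hMxapp : ∀ i, (M *ᵥ x) i = ∑ j, (A i j : ℝ) * x j := by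
    intro i
    rw [Matrix.mulVec, dotProduct]
    apply Finset.sum_congr rfl
    intro j _
    rw [hMdef]
    rfl
  have hMxv : (M *ᵥ x) v = a*m1 + b*m2 := by
    rw [hMxapp v, hsplit (fun j => (A v j : ℝ) * x j)]
    simp only [hdiag v, Nat.cast_zero, zero_mul]
    have e1 : ∑ j ∈ S₁, (A v j : ℝ) * x j = m1 * a := by
      rw [← hm1S, Finset.sum_mul]
      exact Finset.sum_congr rfl fun j hj => by rw [hxS1 j hj]
    have e2 : ∑ j ∈ S₂, (A v j : ℝ) * x j = m2 * b := by
      rw [← hm2S, Finset.sum_mul]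
      exact Finset.sum_congr rfl fun j hj => by rw [hxS2 j hj]
    rw [e1, e2]
    ring
  have hMx1 : ∀ i ∈ S₁, (M *ᵥ x) i = (A i v : ℝ) * gam + (dR - (A i v : ℝ)) * a := by
    intro i hi
    rw [hMxapp i, hsplit (fun j => (A i j : ℝ) * x j)]
    have e1 : ∑ j ∈ S₁, (A i j : ℝ) * x j = (dR - (A i v : ℝ)) * a := by
      rw [← hrow1 i hi, Finset.sum_mul]
      exact Finset.sum_congr rfl fun j hj => by rw [hxS1 j hj]
    have e2 : ∑ j ∈ S₂, (A i j : ℝ) * x j = 0 := by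
      apply Finset.sum_eq_zero
      intro j hj
      rw [hcomp i hi j hj]
      simp
    rw [e1, e2, hxv]
    ring
  have hMx2 : ∀ i ∈ S₂, (M *ᵥ x) i = (A i v : ℝ) * gam + (dR - (A i v : ℝ)) * b := by
    intro i hi
    rw [hMxapp i, hsplit (fun j => (A i j : ℝ) * x j)]
    have e1 : ∑ j ∈ S₂, (A i j : ℝ) * x j = (dR - (A i v : ℝ)) * b := by
      rw [← hrow2 i hi, Finset.sum_mul]
      exact Finset.sum_congr rfl fun j hj => by rw [hxS2 j hj]
    have e2 : ∑ j ∈ S₁, (A i j : ℝ) * x j = 0 := by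
      apply Finset.sum_eq_zero
      intro j hj
      rw [hsym, hcomp j hj i hi]
      simp
    rw [e1, e2, hxv]
    ring
  -- quadratic form value
  have hqxval : x ⬝ᵥ (M *ᵥ x) = a^2*(dR*s1-m1) + b^2*(dR*s2-m2)
      + 2*gam*(a*m1+b*m2) := by
    rw [dotProduct, hsplit (fun i => x i * (M *ᵥ x) i)]
    have e1 : ∑ i ∈ S₁, x i * (M *ᵥ x) i
        = a*gam*m1 + a^2*dR*s1 - a^2*m1 := by
      have : ∀ i ∈ S₁, x i * (M *ᵥ x) i
          = (a*gam - a^2) * (A i v : ℝ) + a^2*dR := by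
        intro i hi
        rw [hxS1 i hi, hMx1 i hi]
        ring
      rw [Finset.sum_congr rfl this, Finset.sum_add_distrib, ← Finset.mul_sum, hm1S',
        hsum1 (a^2*dR)]
      ring
    have e2 : ∑ i ∈ S₂, x i * (M *ᵥ x) i
        = b*gam*m2 + b^2*dR*s2 - b^2*m2 := by
      have : ∀ i ∈ S₂, x i * (M *ᵥ x) i
          = (b*gam - b^2) * (A i v : ℝ) + b^2*dR := by
        intro i hi
        rw [hxS2 i hi, hMx2 i hi]
        ring
      rw [Finset.sum_congr rfl this, Finset.sum_add_distrib, ← Finset.mul_sum, hm2S',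
        hsum2 (b^2*dR)]
      ring
    rw [e1, e2, hxv, hMxv]
    ring
  have hxxval : x ⬝ᵥ x = a^2*s1 + b^2*s2 + gam^2 := by
    rw [dotProduct, hsplit (fun i => x i * x i)]
    have e1 : ∑ i ∈ S₁, x i * x i = s1 * a^2 := by
      rw [← hsum1 (a^2)]
      exact Finset.sum_congr rfl fun i hi => by rw [hxS1 i hi]; ring
    have e2 : ∑ i ∈ S₂, x i * x i = s2 * b^2 := by
      rw [← hsum2 (b^2)]
      exact Finset.sum_congr rfl fun i hi => by rw [hxS2 i hi]; ring
    rw [e1, e2, hxv]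
    ring
  have hqx : lam * (x ⬝ᵥ x) ≤ x ⬝ᵥ (M *ᵥ x) := by
    rw [hqxval, hxxval, hgam]
    linear_combination -hE
  exact lam_le_lambda2 M hM hn lam z x hzne hxne hzx hqz hqx hcz hcx
end
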